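/- arXiv:nlin/0205037 — 8 statements merged into one kernel-verified Lean document; each statement's English description precedes it below -/
import Mathlib

section
/- Let N ≥ 2, ω = e^{2πi/N}, ω^{1/2} = e^{iπ/N}, and p = (x,y) a point on the Fermat curve x^N + y^N = 1 with x, y ≠ 0. Define Op = (ω^{-1}x^{-1}, ω^{-1/2}x^{-1}y) and Φ(n) = (-1)^n ω^{n²/2}. Then Op lies on the Fermat curve, and for all n ∈ Z/N: w_p(n) · w_{Op}(-n) · Φ(n) = 1. -/
open Complex

/-- the automorphism `O` of the Fermat curve,
`Op = (ω⁻¹ x⁻¹, ω^{-1/2} x⁻¹ y)`, maps the curve to itself and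
`w_p(n) · w_{Op}(-n) · Φ(n) = 1` where `Φ(n) = (-1)^n ω^{n²/2}`. -/
theorem fermat_O_automorphism (N : ℕ) (hN : 2 ≤ N)
    (ω ωh : ℂ) (hω : ω = Complex.exp (2 * Real.pi * I / N))
    (hωh : ωh = Complex.exp (Real.pi * I / N))
    (x y : ℂ) (hx0 : x ≠ 0) (hy0 : y ≠ 0) (hferm : x ^ N + y ^ N = 1)
    (W W' : ℤ → ℂ)
    (hW0 : W 0 = 1)
    (hWrec : ∀ n : ℤ, W n = W (n - 1) * (y / (1 - x * ω ^ n)))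
    (hW'0 : W' 0 = 1)
    (hW'rec : ∀ n : ℤ,
      W' n = W' (n - 1) * ((ωh⁻¹ * x⁻¹ * y) / (1 - (ω⁻¹ * x⁻¹) * ω ^ n))) :
    (ω⁻¹ * x⁻¹) ^ N + (ωh⁻¹ * x⁻¹ * y) ^ N = 1 ∧
      ∀ n : ℤ, W n * W' (-n) * ((-1 : ℂ) ^ n * Complex.exp (Real.pi * I * (n : ℂ) ^ 2 / N)) = 1 := by
  have hN0 : (N : ℂ) ≠ 0 := by
    exact_mod_cast Nat.cast_ne_zero.mpr (by omega : N ≠ 0)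
  have hωh0 : ωh ≠ 0 := by rw [hωh]; exact Complex.exp_ne_zero _
  have hω0 : ω ≠ 0 := by rw [hω]; exact Complex.exp_ne_zero _
  have hsq : ωh ^ 2 = ω := by
    rw [hωh, hω, ← Complex.exp_nat_mul]
    congr 1
    ring
  have hωN : ω ^ N = 1 := by
    rw [hω, ← Complex.exp_nat_mul]
    rw [show (N : ℂ) * (2 * Real.pi * I / N) = 2 * Real.pi * I by field_simp]
    exact Complex.exp_two_pi_mul_I
  have hωhN : ωh ^ N = -1 := by
    rw [hωh, ← Complex.exp_nat_mul]
    rw [show (N : ℂ) * (Real.pi * I / N) = Real.pi * I by field_simp]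
    exact Complex.exp_pi_mul_I
  have hxN : x ^ N ≠ 0 := pow_ne_zero _ hx0
  constructor
  · rw [mul_pow, mul_pow, mul_pow, inv_pow, inv_pow, inv_pow, hωN, hωhN]
    field_simp
    linear_combination -hferm
  -- second part
  have hΦ : ∀ n : ℤ, Complex.exp (Real.pi * I * (n : ℂ) ^ 2 / N) = ωh ^ (n ^ 2) := by
    intro n
    rw [hωh, ← Complex.exp_int_mul]
    congr 1
    push_cast
    ring
  have hden : ∀ n : ℤ, 1 - x * ω ^ n ≠ 0 := by
    intro n h
    have hx1 : x * ω ^ n = 1 := by linear_combination -h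
    have : x ^ N * (ω ^ n) ^ N = 1 := by rw [← mul_pow, hx1, one_pow]
    have hωnN : (ω ^ n) ^ N = 1 := by
      rw [← zpow_natCast (ω ^ n), ← zpow_mul, mul_comm, zpow_mul, zpow_natCast, hωN, one_zpow]
    rw [hωnN, mul_one] at this
    have hyN : y ^ N = 0 := by linear_combination hferm - this
    exact hy0 (pow_eq_zero_iff (by omega : N ≠ 0) |>.mp hyN)
  -- step lemma
  set G : ℤ → ℂ := fun n =>
    W n * W' (-n) * ((-1 : ℂ) ^ n * Complex.exp (Real.pi * I * (n : ℂ) ^ 2 / N)) with hG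
  have hstep : ∀ n : ℤ, G n = G (n - 1) := by
    intro n
    have hu0 : ω ^ n ≠ 0 := zpow_ne_zero _ hω0
    have hd1 : 1 - x * ω ^ n ≠ 0 := hden n
    have hd2 : 1 - (ω⁻¹ * x⁻¹) * ω ^ (1 - n) ≠ 0 := by
      have : (ω⁻¹ * x⁻¹) * ω ^ (1 - n) = x⁻¹ * (ω ^ n)⁻¹ := by
        rw [zpow_sub₀ hω0, zpow_one]
        field_simp
      rw [this]
      intro h
      apply hd1
      have hx1 : x⁻¹ * (ω ^ n)⁻¹ = 1 := by linear_combination -h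
      have : x * ω ^ n * (x⁻¹ * (ω ^ n)⁻¹) = x * ω ^ n := by rw [hx1, mul_one]
      field_simp at this
      linear_combination this
    have e1 : W n = W (n - 1) * (y / (1 - x * ω ^ n)) := hWrec n
    have e2 : W' (-(n - 1)) = W' (-n) * ((ωh⁻¹ * x⁻¹ * y) / (1 - (ω⁻¹ * x⁻¹) * ω ^ (1 - n))) := by
      have := hW'rec (1 - n)
      rw [show (1 - n - 1 : ℤ) = -n by ring] at this
      rw [show (-(n - 1) : ℤ) = 1 - n by ring]
      exact this
    simp only [hG]
    rw [e1, e2, hΦ, hΦ]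
    -- power splittings
    have hp1 : ((-1 : ℂ)) ^ n = (-1 : ℂ) ^ (n - 1) * (-1) := by
      rw [zpow_sub₀ (by norm_num : (-1 : ℂ) ≠ 0), zpow_one]
      field_simp
    have hsqz : ωh ^ (2 : ℤ) = ω := by
      rw [show (2 : ℤ) = ((2 : ℕ) : ℤ) from rfl, zpow_natCast, hsq]
    have hp2 : ωh ^ (n ^ 2) = ωh ^ ((n - 1) ^ 2) * (ω ^ n * ωh⁻¹) := by
      have h2n : ωh ^ (2 * n) = ω ^ n := by rw [zpow_mul, hsqz]
      calc ωh ^ (n ^ 2) = ωh ^ ((n - 1) ^ 2 + (2 * n - 1)) := by ring_nf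
        _ = ωh ^ ((n - 1) ^ 2) * (ωh ^ (2 * n) * ωh⁻¹) := by
            rw [zpow_add₀ hωh0, zpow_sub₀ hωh0, zpow_one, div_eq_mul_inv]
        _ = ωh ^ ((n - 1) ^ 2) * (ω ^ n * ωh⁻¹) := by rw [h2n]
    rw [hp1, hp2]
    have hsub : (ω⁻¹ * x⁻¹) * ω ^ (1 - n) = x⁻¹ * (ω ^ n)⁻¹ := by
      rw [zpow_sub₀ hω0, zpow_one]
      field_simp
    rw [hsub] at hd2 ⊢
    have hxu : x * ω ^ n - 1 ≠ 0 := fun h => hd1 (by linear_combination -h)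
    have hkey : y / (1 - x * ω ^ n) * (-1 * (ω ^ n * ωh⁻¹)) =
        ωh⁻¹ * x⁻¹ * y / (1 - x⁻¹ * (ω ^ n)⁻¹) := by
      rw [show (1 : ℂ) - x⁻¹ * (ω ^ n)⁻¹ = (x * ω ^ n - 1) / (x * ω ^ n) by
        field_simp]
      rw [div_div_eq_mul_div]
      field_simp
      ring
    linear_combination
      (W (n - 1) * W' (-n) * (-1 : ℂ) ^ (n - 1) * ωh ^ ((n - 1) ^ 2)) * hkey
  have key : ∀ n : ℤ, G n = 1 := by
    have hG0 : G 0 = 1 := by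
      simp only [hG]
      norm_num [hW0, hW'0]
    intro n
    induction n using Int.induction_on with
    | zero => exact hG0
    | succ k ih => rw [show ((k : ℤ) + 1) = (k + 1 : ℤ) from rfl]
                   have := hstep (k + 1)
                   simpa [this] using ih
    | pred k ih =>
        have h := hstep (-k)
        rw [← h]
        exact ih
  exact fun n => key n
end

section
/- Let N ≥ 2, ω = e^{2πi/N}, and p = (x,y) on the Fermat curve x^N + y^N = 1 with y ≠ 0 and x ω^n ≠ 1 for all n. Then for any a, b ∈ Z/N: ∑_{n ∈ Z/N} w_{(ωx, ωy)}(n+a) / w_{(x,y)}(n+b) = N · ((1-ωx)/(ωx)) · (x^N/(1-x^N)) · δ_{a,b}. -/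
open Complex Polynomial

lemma prodroots {N : ℕ} (hN : 0 < N) {ω : ℂ} (hprim : IsPrimitiveRoot ω N) (z : ℂ) :
    ∏ k ∈ Finset.range N, (z - ω ^ k) = z ^ N - 1 := by
  have hroots : nthRoots N (1:ℂ) = (Multiset.range N).map (ω ^ ·) := by
    simpa using hprim.nthRoots_eq (one_pow N)
  have hmonic : (X ^ N - C (1:ℂ)).Monic := monic_X_pow_sub_C 1 hN.ne'
  have hcard : Multiset.card (X ^ N - C (1:ℂ)).roots = (X ^ N - C (1:ℂ)).natDegree := by
    rw [natDegree_X_pow_sub_C, ← nthRoots, hroots]; simp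
  have heq := prod_multiset_X_sub_C_of_monic_of_roots_card_eq hmonic hcard
  have := congrArg (eval z) heq
  rw [← nthRoots, hroots] at this
  simp only [eval_multiset_prod, Multiset.map_map, eval_sub, eval_pow, eval_X, eval_C,
    Function.comp] at this
  rw [← this, Finset.prod, Finset.range_val]

@[to_additive]
lemma shift_prod {M : Type*} [CommMonoid M] {g : ℤ → M} {N : ℕ}
    (hg : ∀ m : ℤ, g (m + N) = g m) (c : ℤ) :
    ∏ n ∈ Finset.range N, g (c + n) = ∏ n ∈ Finset.range N, g n := by
  have step : ∀ m : ℤ, ∏ n ∈ Finset.range N, g (m + 1 + n) = ∏ n ∈ Finset.range N, g (m + n) := by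
    intro m
    rcases Nat.eq_zero_or_pos N with h | h
    · simp [h]
    obtain ⟨K, rfl⟩ : ∃ K, N = K + 1 := ⟨N - 1, by omega⟩
    rw [Finset.prod_range_succ, Finset.prod_range_succ']
    have h1 : g (m + 1 + K) = g (m + 0) := by
      have := hg m
      rw [show m + ((K:ℕ)+1 : ℕ) = m + 1 + K by push_cast; ring] at this
      rw [this]; norm_num
    rw [h1]
    congr 1
    apply Finset.prod_congr rfl
    intro k _
    congr 1
    push_cast; ring
  induction c using Int.induction_on with
  | zero => simp
  | succ k ih => rw [← ih]; exact_mod_cast step k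
  | pred k ih =>
      have := step (-(k:ℤ) - 1)
      rw [show -(k:ℤ) - 1 + 1 = -k by ring] at this
      rw [← this]
      exact ih

lemma aux_alg {P Q A al be x y om : ℂ} (hQ : Q ≠ 0) (hy : y ≠ 0) (hA : A ≠ 0)
    (d1 : 1 - om*x*(A*al) ≠ 0) :
    P * (om * y / (1 - om * x * (A * al))) / (Q * (y / (1 - x * (A * be)))) * A⁻¹ -
      x * (al * om) * (P * (om * y / (1 - om * x * (A * al))) / (Q * (y / (1 - x * (A * be))))) =
    P / Q * (A⁻¹ * om) - x * (be * om) * (P / Q) := by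
  have key : P * (om * y / (1 - om * x * (A * al))) / (Q * (y / (1 - x * (A * be))))
      = P / Q * (om * (1 - x * (A * be)) / (1 - om * x * (A * al))) := by
    field_simp
  rw [key]
  have d1' : 1 - om * x * A * al ≠ 0 := by rwa [mul_assoc (om * x)]
  field_simp

/-- the inversion relation
`∑_{n ∈ Z/N} w_{(ωx,ωy)}(n+a)/w_{(x,y)}(n+b) = N (1-ωx)/(ωx) · x^N/(1-x^N) · δ_{a,b}`. -/
theorem fermat_w_inversion (N : ℕ) (hN : 2 ≤ N)
    (ω : ℂ) (hω : ω = Complex.exp (2 * Real.pi * I / N))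
    (x y : ℂ) (hy0 : y ≠ 0) (hferm : x ^ N + y ^ N = 1)
    (hx : ∀ n : ℤ, x * ω ^ n ≠ 1)
    (W1 W2 : ℤ → ℂ)
    (hW10 : W1 0 = 1)
    (hW1rec : ∀ n : ℤ, W1 n = W1 (n - 1) * ((ω * y) / (1 - (ω * x) * ω ^ n)))
    (hW20 : W2 0 = 1)
    (hW2rec : ∀ n : ℤ, W2 n = W2 (n - 1) * (y / (1 - x * ω ^ n)))
    (a b : ℤ) :
    ∑ n ∈ Finset.range N, W1 ((n : ℤ) + a) / W2 ((n : ℤ) + b) =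
      (N : ℂ) * ((1 - ω * x) / (ω * x)) * (x ^ N / (1 - x ^ N)) *
        (if (a : ZMod N) = (b : ZMod N) then 1 else 0) := by
  have hN0 : 0 < N := by omega
  have hprim : IsPrimitiveRoot ω N := by
    rw [hω]; exact Complex.isPrimitiveRoot_exp N (by omega)
  have hω0 : ω ≠ 0 := hprim.ne_zero (by omega)
  have hωN : ω ^ (N : ℤ) = 1 := by
    rw [zpow_natCast]; exact hprim.pow_eq_one
  have hper : ∀ m : ℤ, ω ^ (m + N) = ω ^ m := fun m => by
    rw [zpow_add₀ hω0, hωN, mul_one]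
  have hden : ∀ m : ℤ, 1 - x * ω ^ m ≠ 0 := fun m h => hx m (by linear_combination -h)
  have h1xN : 1 - x ^ N = y ^ N := by linear_combination -hferm
  have hxN : 1 - x ^ N ≠ 0 := by rw [h1xN]; exact pow_ne_zero _ hy0
  -- product over a full period
  have hprod : ∀ c : ℤ, ∏ k ∈ Finset.range N, (1 - x * ω ^ (c + k)) = 1 - x ^ N := by
    intro c
    rw [shift_prod (g := fun m => 1 - x * ω ^ m) (fun m => by simp only [hper]) c]
    rcases eq_or_ne x 0 with rfl | hx0
    · simp [hN0.ne']
    · have h := prodroots hN0 hprim x⁻¹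
      calc ∏ k ∈ Finset.range N, (1 - x * ω ^ (k:ℤ))
          = ∏ k ∈ Finset.range N, (x * (x⁻¹ - ω ^ k)) := by
            apply Finset.prod_congr rfl
            intro k _
            rw [zpow_natCast]
            field_simp
        _ = x ^ N * ((x⁻¹) ^ N - 1) := by
            rw [Finset.prod_mul_distrib, Finset.prod_const, Finset.card_range, h]
        _ = 1 - x ^ N := by
            field_simp
            rw [one_div, inv_pow, mul_sub, mul_inv_cancel₀ (pow_ne_zero _ hx0), mul_one]
  have e3 : ∀ m : ℤ, (1:ℂ) - (ω * x) * ω ^ m = 1 - x * ω ^ (m + 1) := fun m => by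
    rw [zpow_add_one₀ hω0]; ring
  have hden' : ∀ m : ℤ, (1:ℂ) - (ω * x) * ω ^ m ≠ 0 := fun m => by
    rw [e3 m]; exact hden _
  -- nonvanishing of W2
  have hW2ne : ∀ m : ℤ, W2 m ≠ 0 := by
    have hup : ∀ m : ℤ, W2 (m - 1) ≠ 0 → W2 m ≠ 0 := by
      intro m hm
      rw [hW2rec m]
      exact mul_ne_zero hm (div_ne_zero hy0 (hden m))
    have hdown : ∀ m : ℤ, W2 m ≠ 0 → W2 (m - 1) ≠ 0 := by
      intro m hm h0
      apply hm
      rw [hW2rec m, h0, zero_mul]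
    intro m
    induction m using Int.induction_on with
    | zero => rw [hW20]; exact one_ne_zero
    | succ k ih => have := hup (k + 1) (by simpa using ih); exact this
    | pred k ih => exact hdown (-(k:ℤ)) ih
  -- the ratio formula W1 m = W2 m * ω^m * (1-ωx)/(1-xω^(m+1))
  have hrat : ∀ m : ℤ, W1 m = W2 m * (ω ^ m * ((1 - ω * x) / (1 - x * ω ^ (m + 1)))) := by
    have key : ∀ m : ℤ,
        W2 m * (ω ^ m * ((1 - ω * x) / (1 - x * ω ^ (m + 1))))
          = W2 (m - 1) * (ω ^ (m - 1) * ((1 - ω * x) / (1 - x * ω ^ (m - 1 + 1))))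
            * ((ω * y) / (1 - (ω * x) * ω ^ m)) := by
      intro m
      have e1 : ω ^ m = ω ^ (m - 1) * ω := by
        rw [← zpow_add_one₀ hω0, sub_add_cancel]
      have d1 : (1:ℂ) - x * ω ^ (m - 1 + 1) ≠ 0 := hden _
      have d2 : (1:ℂ) - x * ω ^ (m + 1) ≠ 0 := hden _
      have d3 : (1:ℂ) - x * ω ^ m ≠ 0 := hden m
      rw [e3 m, hW2rec m]
      rw [show m - 1 + 1 = m by ring] at d1 ⊢
      field_simp
      have e1' : ω ^ m = ω ^ (-1 + m) * ω := by
        rw [← zpow_add_one₀ hω0]; congr 1; ring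
      rw [e1']; ring
    intro m
    induction m using Int.induction_on with
    | zero =>
        rw [hW10, hW20, one_mul, zpow_zero, one_mul, zero_add, zpow_one,
          show (1:ℂ) - x * ω = 1 - ω * x by ring, div_self]
        intro h0
        exact hden 1 (by rw [zpow_one]; linear_combination h0)
    | succ k ih =>
        rw [hW1rec ((k:ℤ)+1), show (k:ℤ) + 1 - 1 = k by ring, ih, key ((k:ℤ)+1),
          show (k:ℤ) + 1 - 1 = k by ring]
    | pred k ih =>
        have hk := hW1rec (-(k:ℤ))
        rw [ih] at hk
        have hkey := key (-(k:ℤ))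
        rw [hk] at hkey
        have hc : (ω * y) / (1 - (ω * x) * ω ^ (-(k:ℤ))) ≠ 0 :=
          div_ne_zero (mul_ne_zero hω0 hy0) (hden' _)
        exact mul_right_cancel₀ hc hkey
  -- W2 over a window
  have hW2step : ∀ m : ℤ, ∀ n : ℕ,
      W2 (m + n) = W2 m * ∏ k ∈ Finset.range n, (y / (1 - x * ω ^ (m + 1 + k))) := by
    intro m n
    induction n with
    | zero => simp
    | succ n ih =>
        have hr := hW2rec (m + n + 1)
        rw [show m + (n:ℤ) + 1 - 1 = m + n by ring] at hr
        rw [show m + ((n:ℕ)+1 : ℕ) = m + (n:ℤ) + 1 by push_cast; ring, hr, ih,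
          Finset.prod_range_succ, mul_assoc]
        congr 2
        ring
  -- W2 is N-periodic
  have hW2per : ∀ m : ℤ, W2 (m + N) = W2 m := by
    intro m
    rw [hW2step m N, Finset.prod_div_distrib, Finset.prod_const, Finset.card_range,
      hprod (m + 1), ← h1xN, div_self hxN, mul_one]
  have hW2perZ : ∀ t : ℤ, ∀ m : ℤ, W2 (m + N * t) = W2 m := by
    intro t
    induction t using Int.induction_on with
    | zero => intro m; simp
    | succ k ih =>
        intro m
        have := hW2per (m + N * k)
        rw [show m + (N:ℤ) * ((k:ℤ)+1) = m + N * k + N by ring]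
        rw [this, ih]
    | pred k ih =>
        intro m
        have h := hW2per (m + N * (-(k:ℤ) - 1))
        rw [show m + (N:ℤ) * (-(k:ℤ)-1) + N = m + N * (-(k:ℤ)) by ring] at h
        exact h.symm.trans (ih m)
  have hW1per : ∀ m : ℤ, W1 (m + N) = W1 m := by
    intro m
    rw [hrat (m + N), hrat m, hW2per m, hper m,
      show m + (N:ℤ) + 1 = (m + 1) + N by ring, hper (m + 1)]
  -- geometric sum identity
  have hgeo : ∀ m : ℤ, ∑ j ∈ Finset.range N, (x * ω ^ m) ^ j
      = (1 - x ^ N) / (1 - x * ω ^ m) := by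
    intro m
    rw [geom_sum_eq (hx m)]
    have hpN : (x * ω ^ m) ^ N = x ^ N := by
      rw [mul_pow, ← zpow_natCast (ω ^ m) N, ← zpow_mul, mul_comm m (N:ℤ), zpow_mul, hωN,
        one_zpow, mul_one]
    rw [hpN, show (x:ℂ) ^ N - 1 = -(1 - x ^ N) by ring,
      show x * ω ^ m - 1 = -(1 - x * ω ^ m) by ring, neg_div_neg_eq]
  -- orthogonality
  have horth : ∀ j : ℕ, j < N →
      ∑ n ∈ Finset.range N, ((ω ^ (j + 1) : ℂ)) ^ n = if j = N - 1 then (N : ℂ) else 0 := by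
    intro j hj
    by_cases hj1 : j = N - 1
    · subst hj1
      have h1 : (ω : ℂ) ^ (N - 1 + 1) = 1 := by
        rw [show N - 1 + 1 = N by omega]; exact hprim.pow_eq_one
      simp [h1, if_pos rfl]
    · have hne1 : (ω ^ (j + 1) : ℂ) ≠ 1 := by
        intro h1
        have hdvd := (hprim.pow_eq_one_iff_dvd (j + 1)).mp h1
        have := Nat.le_of_dvd (by omega) hdvd
        omega
      rw [geom_sum_eq hne1, ← pow_mul, mul_comm (j+1) N, pow_mul, hprim.pow_eq_one, one_pow,
        sub_self, zero_div, if_neg hj1]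
  -- the main one-period sum
  have hzz : ∀ (c : ℤ) (k : ℕ), ((ω ^ c : ℂ)) ^ k = ω ^ (c * k) := fun c k => by
    rw [← zpow_natCast (ω ^ c) k, ← zpow_mul]
  have hmain : ∑ n ∈ Finset.range N, (ω ^ (n:ℤ) * ((1 - ω * x) / (1 - x * ω ^ ((n:ℤ) + 1))))
      = (N : ℂ) * (1 - ω * x) * x ^ (N - 1) * ω ^ (N - 1) / (1 - x ^ N) := by
    have step1 : ∀ n ∈ Finset.range N,
        ω ^ (n:ℤ) * ((1 - ω * x) / (1 - x * ω ^ ((n:ℤ) + 1)))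
          = (1 - ω * x) / (1 - x ^ N)
            * ∑ j ∈ Finset.range N, (ω ^ (n:ℤ) * (x * ω ^ ((n:ℤ) + 1)) ^ j) := by
      intro n _
      rw [← Finset.mul_sum, hgeo ((n:ℤ) + 1)]
      have d := hden ((n:ℤ) + 1)
      field_simp
    rw [Finset.sum_congr rfl step1, ← Finset.mul_sum, Finset.sum_comm]
    have inner : ∀ j ∈ Finset.range N,
        ∑ n ∈ Finset.range N, (ω ^ (n:ℤ) * (x * ω ^ ((n:ℤ) + 1)) ^ j)
          = x ^ j * ω ^ j * ∑ n ∈ Finset.range N, ((ω ^ (j + 1) : ℂ)) ^ n := by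
      intro j hj
      rw [Finset.mul_sum]
      apply Finset.sum_congr rfl
      intro n _
      rw [mul_pow, hzz ((n:ℤ) + 1) j, show ((ω:ℂ) ^ (j+1)) ^ n = ω ^ (((j:ℤ)+1) * n) by
        rw [← hzz ((j:ℤ)+1) n]; norm_cast]
      rw [show ((ω:ℂ)) ^ j = ω ^ ((j:ℤ)) from (zpow_natCast ω j).symm]
      rw [show (ω:ℂ) ^ ((n:ℤ)) * (x ^ j * ω ^ (((n:ℤ)+1) * j)) = x ^ j * ω ^ ((n:ℤ) + ((n:ℤ)+1) * (j:ℤ)) by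
        rw [zpow_add₀ hω0]; ring]
      rw [show x ^ j * ω ^ ((j:ℤ)) * ω ^ (((j:ℤ)+1) * (n:ℤ)) = x ^ j * ω ^ ((j:ℤ) + ((j:ℤ)+1) * (n:ℤ)) by
        rw [zpow_add₀ hω0]; ring]
      congr 2
      ring
    rw [Finset.sum_congr rfl inner]
    have colsum : ∑ j ∈ Finset.range N, (x ^ j * ω ^ j * ∑ n ∈ Finset.range N, ((ω ^ (j + 1) : ℂ)) ^ n)
        = x ^ (N-1) * ω ^ (N-1) * N := by
      rw [Finset.sum_congr rfl (fun j hj => by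
        rw [horth j (Finset.mem_range.mp hj)])]
      rw [Finset.sum_eq_single (N-1)
        (fun j _ hj => by rw [if_neg hj, mul_zero])
        (fun h => absurd (Finset.mem_range.mpr (by omega)) h), if_pos rfl]
    rw [colsum]
    field_simp
  by_cases hab : (a : ZMod N) = (b : ZMod N)
  · -- diagonal case
    rw [if_pos hab, mul_one]
    obtain ⟨t, ht⟩ : ∃ t : ℤ, b = a + N * t := by
      have hmod := (ZMod.intCast_eq_intCast_iff a b N).mp hab
      obtain ⟨t, ht⟩ := Int.modEq_iff_dvd.mp hmod
      exact ⟨t, by linarith⟩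
    have hterm : ∀ n ∈ Finset.range N, W1 ((n:ℤ) + a) / W2 ((n:ℤ) + b)
        = ω ^ (a + (n:ℤ)) * ((1 - ω * x) / (1 - x * ω ^ ((a + (n:ℤ)) + 1))) := by
      intro n _
      have hb : (n:ℤ) + b = ((n:ℤ) + a) + N * t := by rw [ht]; ring
      rw [hb, hW2perZ t ((n:ℤ) + a), hrat ((n:ℤ) + a),
        mul_div_cancel_left₀ _ (hW2ne ((n:ℤ) + a)),
        show (n:ℤ) + a = a + n by ring]
    rw [Finset.sum_congr rfl hterm]
    have hgper : ∀ m : ℤ, (fun m : ℤ => ω ^ m * ((1 - ω * x) / (1 - x * ω ^ (m + 1)))) (m + N)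
        = (fun m : ℤ => ω ^ m * ((1 - ω * x) / (1 - x * ω ^ (m + 1)))) m := by
      intro m
      simp only
      rw [hper m, show m + (N:ℤ) + 1 = (m + 1) + N by ring, hper (m + 1)]
    rw [shift_sum (g := fun m : ℤ => ω ^ m * ((1 - ω * x) / (1 - x * ω ^ (m + 1)))) hgper a]
    rw [hmain]
    rcases eq_or_ne x 0 with rfl | hx0
    · rw [zero_pow (by omega : N - 1 ≠ 0), zero_pow (by omega : N ≠ 0)]
      simp
    · have ex : x ^ (N-1) * x = x ^ N := by
        rw [← pow_succ, Nat.sub_add_cancel (by omega)]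
      have eω : ω ^ (N-1) * ω = 1 := by
        rw [← pow_succ, Nat.sub_add_cancel (by omega)]; exact hprim.pow_eq_one
      have eω' : ω ^ (N-1) = ω⁻¹ := eq_inv_of_mul_eq_one_left eω
      have ex' : x ^ (N-1) = x ^ N / x := by rw [← ex]; field_simp
      rw [eω', ex']
      field_simp
  · rw [if_neg hab, mul_zero]
    have hωab : ω ^ (a + 1) ≠ ω ^ (b + 1) := by
      intro h
      apply hab
      rw [ZMod.intCast_eq_intCast_iff]
      have h2 : ω ^ (a + 1 - (b + 1)) = 1 := by
        rw [zpow_sub₀ hω0, h, div_self (zpow_ne_zero _ hω0)]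
      have hdvd := (hprim.zpow_eq_one_iff_dvd _).mp h2
      rw [show a + 1 - (b + 1) = a - b by ring] at hdvd
      exact (Int.modEq_iff_dvd.mpr (by simpa using (dvd_neg.mpr hdvd))).symm.symm
    rcases eq_or_ne x 0 with rfl | hx0
    · -- x = 0
      have hW2x : ∀ m : ℤ, W2 m = y ^ m := by
        intro m
        induction m using Int.induction_on with
        | zero => simpa using hW20
        | succ k ih =>
            have h := hW2rec ((k:ℤ) + 1)
            rw [show (k:ℤ) + 1 - 1 = (k:ℤ) by ring, ih] at h
            rw [h, zpow_add_one₀ hy0]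
            simp
        | pred k ih =>
            have h := hW2rec (-(k:ℤ))
            rw [ih] at h
            simp only [zero_mul, sub_zero, div_one] at h
            have h1 : W2 (-(k:ℤ) - 1) = y ^ (-(k:ℤ)) / y := by
              rw [h]; field_simp
            rw [h1, zpow_sub_one₀ hy0, div_eq_mul_inv]
      have hωy0 : ω * y ≠ 0 := mul_ne_zero hω0 hy0
      have hW1x : ∀ m : ℤ, W1 m = (ω * y) ^ m := by
        intro m
        induction m using Int.induction_on with
        | zero => simpa using hW10
        | succ k ih =>
            have h := hW1rec ((k:ℤ) + 1)
            rw [show (k:ℤ) + 1 - 1 = (k:ℤ) by ring, ih] at h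
            rw [h, zpow_add_one₀ hωy0]
            simp
        | pred k ih =>
            have h := hW1rec (-(k:ℤ))
            rw [ih] at h
            simp only [mul_zero, zero_mul, sub_zero, div_one] at h
            have h1 : W1 (-(k:ℤ) - 1) = (ω * y) ^ (-(k:ℤ)) / (ω * y) := by
              rw [h]; field_simp
            rw [h1, zpow_sub_one₀ hωy0, div_eq_mul_inv]
      have hterm0 : ∀ n ∈ Finset.range N, W1 ((n:ℤ) + a) / W2 ((n:ℤ) + b)
          = (ω ^ a * y ^ (a - b)) * ω ^ ((n:ℤ)) := by
        intro n _
        have hyn : (y:ℂ) ^ ((n:ℤ)) ≠ 0 := zpow_ne_zero _ hy0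
        have hyb : (y:ℂ) ^ b ≠ 0 := zpow_ne_zero _ hy0
        rw [hW1x, hW2x, mul_zpow, zpow_add₀ hω0, zpow_add₀ hy0, zpow_add₀ hy0, zpow_sub₀ hy0]
        field_simp
      rw [Finset.sum_congr rfl hterm0, ← Finset.mul_sum]
      have hsω : ∑ n ∈ Finset.range N, (ω:ℂ) ^ ((n:ℤ)) = 0 := by
        have : ∀ n ∈ Finset.range N, (ω:ℂ) ^ ((n:ℤ)) = ω ^ (n:ℕ) :=
          fun n _ => zpow_natCast ω n
        rw [Finset.sum_congr rfl this, geom_sum_eq (hprim.ne_one (by omega)),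
          hprim.pow_eq_one, sub_self, zero_div]
      rw [hsω, mul_zero]
    · -- x ≠ 0
      set f : ℤ → ℂ := fun n => W1 (n + a) / W2 (n + b) with hf
      have hfper : ∀ n : ℤ, f (n + N) = f n := by
        intro n
        simp only [hf]
        rw [show n + (N:ℤ) + a = (n + a) + N by ring, hW1per,
          show n + (N:ℤ) + b = (n + b) + N by ring, hW2per]
      have hfrec : ∀ n : ℤ, f n * ω ^ (-n) - x * ω ^ (a + 1) * f n
          = f (n - 1) * ω ^ (-(n - 1)) - x * ω ^ (b + 1) * f (n - 1) := by
        intro n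
        have h1 := hW1rec (n + a)
        rw [show n + a - 1 = (n - 1) + a by ring] at h1
        have h2 := hW2rec (n + b)
        rw [show n + b - 1 = (n - 1) + b by ring] at h2
        have d1 : (1:ℂ) - (ω * x) * ω ^ (n + a) ≠ 0 := hden' _
        have d2 : (1:ℂ) - x * ω ^ (n + b) ≠ 0 := hden _
        have w1 : W2 ((n - 1) + b) ≠ 0 := hW2ne _
        have w2 : W2 (n + b) ≠ 0 := hW2ne _
        have eA : ω ^ (n + a) = ω ^ n * ω ^ a := zpow_add₀ hω0 n a
        have eB : ω ^ (n + b) = ω ^ n * ω ^ b := zpow_add₀ hω0 n b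
        have eC : ω ^ (-n) = (ω ^ n)⁻¹ := zpow_neg ω n
        have eD : ω ^ (-(n - 1)) = (ω ^ n)⁻¹ * ω := by
          rw [show -(n - 1) = -n + 1 by ring, zpow_add₀ hω0, zpow_neg, zpow_one]
        have eE : ω ^ (a + 1) = ω ^ a * ω := zpow_add_one₀ hω0 a
        have eF : ω ^ (b + 1) = ω ^ b * ω := zpow_add_one₀ hω0 b
        have hA : (ω:ℂ) ^ n ≠ 0 := zpow_ne_zero n hω0
        rw [eA] at h1 d1
        rw [eB] at h2 d2
        simp only [hf]
        rw [h1, h2, eC, eD, eE, eF]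
        set P := W1 ((n - 1) + a) with hP
        set Q := W2 ((n - 1) + b) with hQ
        set A := (ω:ℂ) ^ n with hA'
        set α := (ω:ℂ) ^ a with hα
        set β := (ω:ℂ) ^ b with hβ
        exact aux_alg w1 hy0 hA d1
      have hsum := Finset.sum_congr rfl
        (fun n (_ : n ∈ Finset.range N) => hfrec ((n:ℤ)))
      rw [Finset.sum_sub_distrib, Finset.sum_sub_distrib,
        ← Finset.mul_sum, ← Finset.mul_sum] at hsum
      have e1 : ∑ n ∈ Finset.range N, f ((n:ℤ) - 1) * ω ^ (-((n:ℤ) - 1))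
          = ∑ n ∈ Finset.range N, f ((n:ℤ)) * ω ^ (-(n:ℤ)) := by
        have hgper2 : ∀ m : ℤ,
            (fun m : ℤ => f m * ω ^ (-m)) (m + N) = (fun m : ℤ => f m * ω ^ (-m)) m := by
          intro m
          simp only
          rw [hfper, show -(m + (N:ℤ)) = (-(N:ℤ)) + (-m) by ring, zpow_add₀ hω0,
            zpow_neg, hωN, inv_one, one_mul]
        have h := shift_sum (g := fun m : ℤ => f m * ω ^ (-m)) hgper2 (-1)
        rw [← h]
        apply Finset.sum_congr rfl
        intro n _
        rw [show -1 + (n:ℤ) = (n:ℤ) - 1 by ring]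
      have e2 : ∑ n ∈ Finset.range N, f ((n:ℤ) - 1) = ∑ n ∈ Finset.range N, f ((n:ℤ)) := by
        have h := shift_sum (g := f) (fun m => hfper m) (-1)
        rw [← h]
        apply Finset.sum_congr rfl
        intro n _
        rw [show -1 + (n:ℤ) = (n:ℤ) - 1 by ring]
      rw [e1, e2] at hsum
      have hS : x * ω ^ (a + 1) * ∑ n ∈ Finset.range N, f ((n:ℤ))
          = x * ω ^ (b + 1) * ∑ n ∈ Finset.range N, f ((n:ℤ)) := sub_right_inj.mp hsum
      have hzero : ∑ n ∈ Finset.range N, f ((n:ℤ)) = 0 := by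
        by_contra hS0
        exact hωab (mul_left_cancel₀ hx0 (mul_right_cancel₀ hS0 hS))
      exact hzero
end

section
/- Let V(x) = ∏_{n=1}^{N-1} (1 - ω^{n+1}x)^n with ω = e^{2πi/N}. Then V(ω^{-1}) = N^{N/2} · e^{iπ(N-1)(N-2)/12}. -/
open Complex

section Aux
open Finset

lemma one_sub_exp (x : ℝ) :
    1 - Complex.exp (2 * x * I) =
      (2 * Real.sin x : ℝ) * Complex.exp (((x - Real.pi / 2 : ℝ)) * I) := by
  have h2x : ((2 * x : ℝ) : ℂ) = 2 * (x:ℂ) := by push_cast; ring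
  have e1 : Complex.exp (2 * (x:ℂ) * I) = Complex.cos (2*x:ℝ) + Complex.sin (2*x:ℝ) * I := by
    rw [← Complex.exp_mul_I, h2x]
  have e2 : Complex.exp (((x - Real.pi / 2 : ℝ)) * I)
      = Complex.cos ((x - Real.pi/2 : ℝ)) + Complex.sin ((x - Real.pi/2 : ℝ)) * I := by
    rw [← Complex.exp_mul_I]
  rw [e1, e2, ← Complex.ofReal_cos, ← Complex.ofReal_sin, ← Complex.ofReal_cos,
    ← Complex.ofReal_sin]
  have hc : Real.cos (x - Real.pi/2) = Real.sin x := by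
    rw [show x - Real.pi/2 = -(Real.pi/2 - x) by ring, Real.cos_neg, Real.cos_pi_div_two_sub]
  have hs : Real.sin (x - Real.pi/2) = - Real.cos x := by
    rw [show x - Real.pi/2 = -(Real.pi/2 - x) by ring, Real.sin_neg, Real.sin_pi_div_two_sub]
  have hcc : Real.cos (2*x) = 1 - 2 * Real.sin x ^ 2 := by
    rw [Real.cos_two_mul']; nlinarith [Real.sin_sq_add_cos_sq x]
  have hss : Real.sin (2*x) = 2 * Real.sin x * Real.cos x := Real.sin_two_mul x
  rw [hc, hs, hcc, hss]
  push_cast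
  ring

lemma sum_id_c (N : ℕ) : ∑ n ∈ range N, (n:ℂ) = N*(N-1)/2 := by
  induction N with
  | zero => simp
  | succ m ih => rw [Finset.sum_range_succ, ih]; push_cast; ring

lemma sum_sq_c (N : ℕ) : ∑ n ∈ range N, (n:ℂ)^2 = N*(N-1)*(2*N-1)/6 := by
  induction N with
  | zero => simp
  | succ m ih => rw [Finset.sum_range_succ, ih]; push_cast; ring

lemma prod_sin (N : ℕ) (hN : 2 ≤ N) :
    ∏ k ∈ range (N-1), (2 * Real.sin (Real.pi*(k+1)/N)) = N := by
  have hN0 : N ≠ 0 := by omega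
  have hμ : IsPrimitiveRoot (Complex.exp (2 * Real.pi * I / N)) N :=
    Complex.isPrimitiveRoot_exp N hN0
  obtain ⟨M, rfl⟩ : ∃ M, N = M + 1 := ⟨N - 1, by omega⟩
  have hc := hμ.prod_one_sub_pow_eq_order
  set N := M + 1 with hNdef
  have hpow : ∀ k : ℕ, Complex.exp (2 * Real.pi * I / N) ^ (k+1)
      = Complex.exp (2 * ((Real.pi * (k+1) / N : ℝ)) * I) := by
    intro k
    rw [← Complex.exp_nat_mul]
    congr 1
    push_cast
    ring
  have habs : ∀ k ∈ range (N - 1),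
      ‖1 - Complex.exp (2 * Real.pi * I / N) ^ (k+1)‖
        = 2 * Real.sin (Real.pi*(k+1)/N) := by
    intro k hk
    simp only [Finset.mem_range] at hk
    have h1 : (0:ℝ) ≤ Real.pi * (k+1) / N := by positivity
    have h2 : Real.pi * (k+1) / N ≤ Real.pi := by
      rw [div_le_iff₀ (by positivity)]
      have : (k:ℝ) + 1 ≤ N := by exact_mod_cast by omega
      nlinarith [Real.pi_pos]
    have hsin := Real.sin_nonneg_of_nonneg_of_le_pi h1 h2
    rw [hpow k, one_sub_exp, norm_mul, Complex.norm_real, Real.norm_eq_abs, Complex.norm_exp_ofReal_mul_I, mul_one,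
      _root_.abs_of_nonneg (by linarith)]
  calc ∏ k ∈ range (N-1), (2 * Real.sin (Real.pi*(k+1)/N))
      = ∏ k ∈ range (N-1), ‖1 - Complex.exp (2 * Real.pi * I / N) ^ (k+1)‖ :=
        (Finset.prod_congr rfl habs).symm
    _ = ‖∏ k ∈ range (N-1), (1 - Complex.exp (2 * Real.pi * I / N) ^ (k+1))‖ :=
        (norm_prod _ _).symm
    _ = N := by
        have h1 : N - 1 = M := by omega
        have h2 : ((M:ℂ) + 1) = (((N:ℝ)) : ℂ) := by push_cast [hNdef]; ring
        rw [h1, hc, h2, Complex.norm_real, Real.norm_eq_abs, _root_.abs_of_nonneg (by positivity)]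

lemma real_prod (N : ℕ) (hN : 2 ≤ N) :
    ∏ n ∈ range N, (2 * Real.sin (Real.pi*n/N))^n = (N:ℝ) ^ ((N:ℝ)/2) := by
  have hN0 : (0:ℕ) < N := by omega
  set a : ℕ → ℝ := fun n => 2 * Real.sin (Real.pi*n/N) with ha
  have hsymm : ∀ n ∈ Finset.Ico 1 N, a (N - n) = a n := by
    intro n hn
    simp only [Finset.mem_Ico] at hn
    have : (Real.pi * (N - n : ℕ) / N) = Real.pi - Real.pi * n / N := by
      rw [Nat.cast_sub hn.2.le]
      field_simp
    simp only [ha, this, Real.sin_pi_sub]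
  have hpos : ∀ n ∈ Finset.Ico 1 N, 0 < a n := by
    intro n hn
    simp only [Finset.mem_Ico] at hn
    have h1 : (0:ℝ) < Real.pi * n / N := by
      have : (0:ℝ) < (n:ℝ) := by exact_mod_cast hn.1
      positivity
    have h2 : Real.pi * n / N < Real.pi := by
      rw [div_lt_iff₀ (by positivity)]
      have : (n:ℝ) < N := by exact_mod_cast hn.2
      nlinarith [Real.pi_pos]
    have := Real.sin_pos_of_pos_of_lt_pi h1 h2
    simp only [ha]; linarith
  have hP : ∏ n ∈ range N, a n ^ n = ∏ n ∈ Finset.Ico 1 N, a n ^ n := by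
    rw [Finset.range_eq_Ico, Finset.prod_eq_prod_Ico_succ_bot hN0]
    simp
  have hrefl : ∏ n ∈ Finset.Ico 1 N, a n ^ n = ∏ n ∈ Finset.Ico 1 N, a n ^ (N - n) := by
    refine Finset.prod_nbij' (i := fun n => N - n) (j := fun n => N - n) ?_ ?_ ?_ ?_ ?_
    · intro n hn; simp only [Finset.mem_Ico] at *; omega
    · intro n hn; simp only [Finset.mem_Ico] at *; omega
    · intro n hn; simp only [Finset.mem_Ico] at *; omega
    · intro n hn; simp only [Finset.mem_Ico] at *; omega
    · intro n hn
      have hn' := Finset.mem_Ico.mp hn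
      have h1 : N - (N - n) = n := by omega
      have h2 : a (N - n) = a n := hsymm n hn
      rw [h1, h2]
  have hQ : ∏ n ∈ Finset.Ico 1 N, a n = N := by
    rw [Finset.prod_Ico_eq_prod_range]
    rw [← prod_sin N hN]
    apply Finset.prod_congr rfl
    intro k hk
    simp only [ha]
    push_cast
    ring_nf
  have hsq : (∏ n ∈ range N, a n ^ n) ^ 2 = (N:ℝ) ^ (N:ℕ) := by
    rw [hP, sq]
    nth_rewrite 1 [hrefl]
    rw [← Finset.prod_mul_distrib]
    have : ∀ n ∈ Finset.Ico 1 N, a n ^ (N - n) * a n ^ n = a n ^ N := by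
      intro n hn
      simp only [Finset.mem_Ico] at hn
      rw [← pow_add]
      congr 1
      omega
    rw [Finset.prod_congr rfl this, Finset.prod_pow, hQ]
  have hPpos : 0 < ∏ n ∈ range N, a n ^ n := by
    rw [hP]
    exact Finset.prod_pos fun n hn => pow_pos (hpos n hn) n
  have := Real.sqrt_sq hPpos.le
  rw [← this, hsq, Real.sqrt_eq_rpow, ← Real.rpow_natCast (N:ℝ) N,
    ← Real.rpow_mul (by positivity)]
  ring_nf

end Aux

open Finset in
/-- `V(ω⁻¹) = N^{N/2} e^{iπ(N-1)(N-2)/12}` where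
`V(x) = ∏_{n=1}^{N-1}(1 - ω^{n+1}x)^n` and `ω = e^{2πi/N}`. -/
theorem V_special_value (N : ℕ) (hN : 2 ≤ N)
    (ω : ℂ) (hω : ω = Complex.exp (2 * Real.pi * I / N)) :
    ∏ n ∈ Finset.range N, (1 - ω ^ (n + 1) * ω⁻¹) ^ n =
      (N : ℂ) ^ ((N : ℂ) / 2) *
        Complex.exp (Real.pi * I * (N - 1) * (N - 2) / 12) := by
  have hN0 : (N:ℂ) ≠ 0 := by exact_mod_cast (by omega : N ≠ 0)
  have hω0 : ω ≠ 0 := by rw [hω]; exact Complex.exp_ne_zero _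
  have hωn : ∀ n : ℕ, ω ^ (n + 1) * ω⁻¹ = ω ^ n := by
    intro n; rw [pow_succ, mul_assoc, mul_inv_cancel₀ hω0, mul_one]
  have hpow : ∀ n : ℕ, ω ^ n = Complex.exp (2 * ((Real.pi * n / N : ℝ)) * I) := by
    intro n
    rw [hω, ← Complex.exp_nat_mul]
    congr 1
    push_cast
    ring
  have hterm : ∀ n : ℕ, 1 - ω ^ (n + 1) * ω⁻¹
      = ((2 * Real.sin (Real.pi*n/N) : ℝ) : ℂ)
        * Complex.exp (((Real.pi*n/N - Real.pi / 2 : ℝ)) * I) := by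
    intro n
    rw [hωn, hpow, one_sub_exp]
  calc ∏ n ∈ Finset.range N, (1 - ω ^ (n + 1) * ω⁻¹) ^ n
      = ∏ n ∈ Finset.range N, (((2 * Real.sin (Real.pi*n/N) : ℝ) : ℂ)
          * Complex.exp (((Real.pi*n/N - Real.pi / 2 : ℝ)) * I)) ^ n := by
        exact Finset.prod_congr rfl fun n _ => by rw [hterm]
    _ = (((∏ n ∈ Finset.range N, (2 * Real.sin (Real.pi*n/N))^n : ℝ)) : ℂ)
          * Complex.exp (∑ n ∈ Finset.range N, (n:ℂ) * (((Real.pi*n/N - Real.pi / 2 : ℝ)) * I)) := by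
        rw [Complex.exp_sum]
        push_cast
        rw [← Finset.prod_mul_distrib]
        apply Finset.prod_congr rfl
        intro n _
        rw [mul_pow, ← Complex.exp_nat_mul]
    _ = (N : ℂ) ^ ((N : ℂ) / 2) *
        Complex.exp (Real.pi * I * (N - 1) * (N - 2) / 12) := by
        congr 1
        · rw [real_prod N hN]
          rw [show ((N:ℂ)/2) = (((N:ℝ)/2 : ℝ) : ℂ) by push_cast; ring,
            ← Complex.ofReal_natCast N, Complex.ofReal_cpow (by positivity)]
        · congr 1
          have h1 := sum_id_c N
          have h2 := sum_sq_c N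
          have step : ∑ n ∈ Finset.range N, (n:ℂ) * (((Real.pi*n/N - Real.pi / 2 : ℝ)) * I)
              = ((Real.pi / N : ℂ) * ∑ n ∈ Finset.range N, (n:ℂ)^2
                - (Real.pi / 2 : ℂ) * ∑ n ∈ Finset.range N, (n:ℂ)) * I := by
            rw [Finset.mul_sum, Finset.mul_sum, ← Finset.sum_sub_distrib, Finset.sum_mul]
            apply Finset.sum_congr rfl
            intro n _
            push_cast
            ring
          rw [step, h1, h2]
          field_simp
          ring
end

section
/- Fix complex parameters {p_n, q_n}_{n≥1} with all p_i, q_j pairwise distinct. Define σ_n(z) = (p_n - z)/(q_n - z) and H^{(g)} recursively by H^{(0)} = 1 and H^{(g)}({f_n}_{n=1}^g) = H^{(g-1)}({f_n σ_n(q_g)}_{n=1}^{g-1}) − f_g ∏_{m=1}^{g-1} σ_g(q_m) · H^{(g-1)}({f_n σ_n(p_g)}_{n=1}^{g-1}). Then H^{(g)}({f_n}) = det | q_j^{i-1} − f_j p_j^{i-1} |_{i,j=1}^g / ∏_{i>j}(q_i − q_j) (Casoratti determinant representation). -/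
open Complex

/-- `σ_n(z) = (p_n - z)/(q_n - z)`. -/
noncomputable def sigma (p q : ℕ → ℂ) (n : ℕ) (z : ℂ) : ℂ := (p n - z) / (q n - z)

/-- The rational-limit theta function `H^{(g)}`, defined recursively by `H^{(0)} = 1` and
`H^{(g)}({f_n}) = H^{(g-1)}({f_n σ_n(q_g)}) − f_g ∏_{m<g} σ_g(q_m) · H^{(g-1)}({f_n σ_n(p_g)})`. -/
noncomputable def Hfun (p q : ℕ → ℂ) : ℕ → (ℕ → ℂ) → ℂ
  | 0, _ => 1
  | g + 1, f =>
      Hfun p q g (fun n => f n * sigma p q n (q (g + 1))) -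
        f (g + 1) * (∏ m ∈ Finset.Icc 1 g, sigma p q (g + 1) (q m)) *
          Hfun p q g (fun n => f n * sigma p q n (p (g + 1)))

noncomputable def xv (p q : ℕ → ℂ) (S : Finset ℕ) (k : ℕ) : ℂ := if k ∈ S then p k else q k

lemma Hstep (p q : ℕ → ℂ) (g : ℕ)
    (hq : ∀ i ∈ Finset.Icc 1 (g+1), ∀ j ∈ Finset.Icc 1 (g+1), i ≠ j → q i ≠ q j)
    (hpq : ∀ i ∈ Finset.Icc 1 (g+1), ∀ j ∈ Finset.Icc 1 (g+1), p i ≠ q j)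
    (hsub : Finset.Icc 1 g ⊆ Finset.Icc 1 (g+1))
    (hmem : (g+1) ∈ Finset.Icc 1 (g+1))
    (hnotmem : (g+1) ∉ Finset.Icc 1 g)
    (f : ℕ → ℂ) (S : Finset ℕ) (hS : S ⊆ Finset.Icc 1 g) :
    (∏ j ∈ S, -((fun n => f n * sigma p q n (q (g + 1))) j)) *
        (∏ i ∈ Finset.Icc 1 g, ∏ j ∈ Finset.Ico 1 i, ((xv p q S i - xv p q S j) / (q i - q j))) -
      f (g + 1) * (∏ m ∈ Finset.Icc 1 g, sigma p q (g + 1) (q m)) *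
        ((∏ j ∈ S, -((fun n => f n * sigma p q n (p (g + 1))) j)) *
          (∏ i ∈ Finset.Icc 1 g, ∏ j ∈ Finset.Ico 1 i, ((xv p q S i - xv p q S j) / (q i - q j)))) =
    (∏ j ∈ S, -f j) *
        (∏ i ∈ insert (g+1) (Finset.Icc 1 g), ∏ j ∈ Finset.Ico 1 i, ((xv p q S i - xv p q S j) / (q i - q j))) +
      (∏ j ∈ insert (g+1) S, -f j) *
        (∏ i ∈ insert (g+1) (Finset.Icc 1 g), ∏ j ∈ Finset.Ico 1 i,
          ((xv p q (insert (g+1) S) i - xv p q (insert (g+1) S) j) / (q i - q j))) := by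
  have hgS : (g+1) ∉ S := fun h => hnotmem (hS h)
  have hxq : xv p q S (g+1) = q (g+1) := if_neg hgS
  have hxp : xv p q (insert (g+1) S) (g+1) = p (g+1) := if_pos (Finset.mem_insert_self _ _)
  have hxv : ∀ k, k ≠ g+1 → xv p q (insert (g+1) S) k = xv p q S k := by
    intro k hk; simp [xv, Finset.mem_insert, hk]
  -- P' = P
  have hP : (∏ i ∈ Finset.Icc 1 g, ∏ j ∈ Finset.Ico 1 i,
      ((xv p q (insert (g+1) S) i - xv p q (insert (g+1) S) j) / (q i - q j))) =
      ∏ i ∈ Finset.Icc 1 g, ∏ j ∈ Finset.Ico 1 i, ((xv p q S i - xv p q S j) / (q i - q j)) := by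
    refine Finset.prod_congr rfl fun i hi => Finset.prod_congr rfl fun j hj => ?_
    rw [Finset.mem_Icc] at hi
    rw [Finset.mem_Ico] at hj
    rw [hxv i (by omega), hxv j (by omega)]
  -- key1
  have key1 : (∏ j ∈ S, sigma p q j (q (g+1))) =
      ∏ j ∈ Finset.Icc 1 g, ((q (g+1) - xv p q S j) / (q (g+1) - q j)) := by
    rw [← Finset.prod_subset hS (fun x hx hxS => ?_)]
    · refine Finset.prod_congr rfl fun j hj => ?_
      rw [xv, if_pos hj, sigma]
      rw [← neg_sub (q (g+1)) (p j), ← neg_sub (q (g+1)) (q j), neg_div_neg_eq]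
    · rw [xv, if_neg hxS, div_self]
      exact sub_ne_zero.mpr (hq (g+1) hmem x (hsub hx) (by rw [Finset.mem_Icc] at hx; omega))
  -- key2
  have key2 : (∏ m ∈ Finset.Icc 1 g, sigma p q (g+1) (q m)) * (∏ j ∈ S, sigma p q j (p (g+1))) =
      ∏ j ∈ Finset.Icc 1 g, ((p (g+1) - xv p q S j) / (q (g+1) - q j)) := by
    have : ∀ j ∈ Finset.Icc 1 g, ((p (g+1) - xv p q S j) / (q (g+1) - q j)) =
        sigma p q (g+1) (q j) * (if j ∈ S then sigma p q j (p (g+1)) else 1) := by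
      intro j hj
      have hqq : q (g+1) - q j ≠ 0 :=
        sub_ne_zero.mpr (hq (g+1) hmem j (hsub hj) (by rw [Finset.mem_Icc] at hj; omega))
      have hqp : q j - p (g+1) ≠ 0 :=
        sub_ne_zero.mpr fun h => hpq (g+1) hmem j (hsub hj) (by rw [← h])
      by_cases hjS : j ∈ S
      · rw [if_pos hjS, xv, if_pos hjS, sigma, sigma]
        field_simp
        ring
      · rw [if_neg hjS, xv, if_neg hjS, mul_one, sigma]
    have e : (∏ j ∈ Finset.Icc 1 g, ((p (g+1) - xv p q S j) / (q (g+1) - q j))) =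
        ∏ j ∈ Finset.Icc 1 g, (sigma p q (g+1) (q j) * (if j ∈ S then sigma p q j (p (g+1)) else 1)) :=
      Finset.prod_congr rfl this
    rw [e, Finset.prod_mul_distrib]
    congr 1
    have e2 : (∏ j ∈ S, (if j ∈ S then sigma p q j (p (g+1)) else 1)) =
        ∏ j ∈ Finset.Icc 1 g, (if j ∈ S then sigma p q j (p (g+1)) else 1) :=
      Finset.prod_subset hS (fun x hx hxS => if_neg hxS)
    rw [← e2]
    refine Finset.prod_congr rfl fun j hj => ?_
    rw [if_pos hj]
  -- split the insert products
  rw [Finset.prod_insert hnotmem, Finset.prod_insert hnotmem, Finset.prod_insert hgS,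
    Finset.Ico_add_one_right_eq_Icc, hP, hxq, hxp]
  have hxv2 : (∏ j ∈ Finset.Icc 1 g, ((p (g+1) - xv p q (insert (g+1) S) j) / (q (g+1) - q j))) =
      ∏ j ∈ Finset.Icc 1 g, ((p (g+1) - xv p q S j) / (q (g+1) - q j)) := by
    refine Finset.prod_congr rfl fun j hj => ?_
    rw [Finset.mem_Icc] at hj
    rw [hxv j (by omega)]
  rw [hxv2, ← key1, ← key2]
  simp only [show ∀ a b : ℂ, -(a*b) = (-a)*b from fun a b => (neg_mul a b).symm,
    Finset.prod_mul_distrib]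
  ring

lemma Hfun_sum (p q : ℕ → ℂ) (g : ℕ)
    (hq : ∀ i ∈ Finset.Icc 1 g, ∀ j ∈ Finset.Icc 1 g, i ≠ j → q i ≠ q j)
    (hpq : ∀ i ∈ Finset.Icc 1 g, ∀ j ∈ Finset.Icc 1 g, p i ≠ q j)
    (f : ℕ → ℂ) :
    Hfun p q g f = ∑ S ∈ (Finset.Icc 1 g).powerset,
      (∏ j ∈ S, (-f j)) *
        ∏ i ∈ Finset.Icc 1 g, ∏ j ∈ Finset.Ico 1 i, ((xv p q S i - xv p q S j) / (q i - q j)) := by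
  induction g generalizing f with
  | zero => simp [Hfun]
  | succ g IH =>
    have hsub : Finset.Icc 1 g ⊆ Finset.Icc 1 (g+1) := Finset.Icc_subset_Icc_right (by omega)
    have hq' : ∀ i ∈ Finset.Icc 1 g, ∀ j ∈ Finset.Icc 1 g, i ≠ j → q i ≠ q j :=
      fun i hi j hj => hq i (hsub hi) j (hsub hj)
    have hpq' : ∀ i ∈ Finset.Icc 1 g, ∀ j ∈ Finset.Icc 1 g, p i ≠ q j :=
      fun i hi j hj => hpq i (hsub hi) j (hsub hj)
    have hmem : (g+1) ∈ Finset.Icc 1 (g+1) := by simp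
    have hnotmem : (g+1) ∉ Finset.Icc 1 g := by simp
    have hicc : Finset.Icc 1 (g+1) = insert (g+1) (Finset.Icc 1 g) := by
      ext k; simp [Finset.mem_Icc, Finset.mem_insert]; omega
    show Hfun p q g (fun n => f n * sigma p q n (q (g + 1))) -
        f (g + 1) * (∏ m ∈ Finset.Icc 1 g, sigma p q (g + 1) (q m)) *
          Hfun p q g (fun n => f n * sigma p q n (p (g + 1))) = _
    rw [IH hq' hpq', IH hq' hpq', hicc, Finset.sum_powerset_insert hnotmem,
      Finset.mul_sum, ← Finset.sum_sub_distrib, ← Finset.sum_add_distrib]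
    refine Finset.sum_congr rfl ?_
    intro S hS
    rw [Finset.mem_powerset] at hS
    exact Hstep p q g hq hpq hsub hmem hnotmem f S hS

lemma pair_prod (g : ℕ) (F : ℕ → ℕ → ℂ) :
    (∏ i : Fin g, ∏ j ∈ Finset.Ioi i, F ((j:ℕ)+1) ((i:ℕ)+1)) =
    ∏ a ∈ Finset.Icc 1 g, ∏ b ∈ Finset.Ico 1 a, F a b := by
  rw [Finset.prod_sigma', Finset.prod_sigma']
  rcases Nat.eq_zero_or_pos g with h|h
  · subst h
    rw [Finset.prod_eq_one (fun x hx => ?_), Finset.prod_eq_one (fun x hx => ?_)]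
    · exact absurd (Finset.mem_sigma.mp hx).1 (by simp)
    · exact x.1.elim0
  · refine Finset.prod_nbij' (fun z => ⟨(z.2:ℕ)+1, (z.1:ℕ)+1⟩)
      (fun z => ⟨⟨(z.2-1) % g, Nat.mod_lt _ h⟩, ⟨(z.1-1) % g, Nat.mod_lt _ h⟩⟩) ?_ ?_ ?_ ?_ ?_
    · rintro ⟨i, j⟩ hz
      simp only [Finset.mem_sigma, Finset.mem_Ioi, Fin.lt_def] at hz
      simp only [Finset.mem_sigma, Finset.mem_Icc, Finset.mem_Ico]
      have := i.isLt; have := j.isLt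
      omega
    · rintro ⟨a, b⟩ hz
      simp only [Finset.mem_sigma, Finset.mem_Icc, Finset.mem_Ico] at hz
      have e1 : (a-1) % g = a-1 := Nat.mod_eq_of_lt (by omega)
      have e2 : (b-1) % g = b-1 := Nat.mod_eq_of_lt (by omega)
      simp only [Finset.mem_sigma, Finset.mem_univ, Finset.mem_Ioi, Fin.lt_def, true_and, e1, e2]
      omega
    · rintro ⟨i, j⟩ hz
      have h1 := i.isLt; have h2 := j.isLt
      simp [Sigma.ext_iff, Fin.ext_iff, Nat.mod_eq_of_lt h1, Nat.mod_eq_of_lt h2]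
    · rintro ⟨a, b⟩ hz
      simp only [Finset.mem_sigma, Finset.mem_Icc, Finset.mem_Ico] at hz
      have e1 : (a-1) % g = a-1 := Nat.mod_eq_of_lt (by omega)
      have e2 : (b-1) % g = b-1 := Nat.mod_eq_of_lt (by omega)
      simp only [Sigma.ext_iff, e1, e2, heq_eq_eq]
      omega
    · intro z hz; rfl

noncomputable def toS (g : ℕ) (r : Fin g → Bool) : Finset ℕ :=
  Finset.image (fun i : Fin g => (i:ℕ)+1) (Finset.univ.filter fun i => r i = false)

lemma mem_toS (g : ℕ) (r : Fin g → Bool) (i : Fin g) : ((i:ℕ)+1 ∈ toS g r) ↔ r i = false := by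
  simp only [toS, Finset.mem_image, Finset.mem_filter, Finset.mem_univ, true_and]
  constructor
  · rintro ⟨a, ha, hai⟩
    have : a = i := Fin.ext (by omega)
    rwa [this] at ha
  · intro h; exact ⟨i, h, rfl⟩

lemma det_sum (p q : ℕ → ℂ) (g : ℕ) (f : ℕ → ℂ) :
    (Matrix.of fun i j : Fin g =>
        q (j.val + 1) ^ (i.val) - f (j.val + 1) * p (j.val + 1) ^ (i.val)).det
    = ∑ S ∈ (Finset.Icc 1 g).powerset, (∏ j ∈ S, (-f j)) *
        ∏ i ∈ Finset.Icc 1 g, ∏ j ∈ Finset.Ico 1 i, (xv p q S i - xv p q S j) := by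
  classical
  have ht : (Matrix.of fun i j : Fin g =>
        q (j.val + 1) ^ (i.val) - f (j.val + 1) * p (j.val + 1) ^ (i.val)) =
      Matrix.transpose (Matrix.of fun i j : Fin g =>
        q (i.val + 1) ^ (j.val) - f (i.val + 1) * p (i.val + 1) ^ (j.val)) := by
    ext i j; simp [Matrix.transpose_apply]
  rw [ht, Matrix.det_transpose]
  set c : Fin g → Bool → ℂ := fun i b => if b then 1 else -f (i.val+1) with hc
  set w : Fin g → Bool → (Fin g → ℂ) :=
    fun i b j => (if b then q (i.val+1) else p (i.val+1)) ^ (j:ℕ) with hw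
  set y : (Fin g → Bool) → Fin g → ℂ :=
    fun r i => if r i then q (i.val+1) else p (i.val+1) with hy
  have hrows : ∀ i : Fin g, (Matrix.of fun i j : Fin g =>
        q (i.val + 1) ^ (j.val) - f (i.val + 1) * p (i.val + 1) ^ (j.val)) i =
      ∑ b : Bool, c i b • w i b := by
    intro i; funext j
    simp only [Matrix.of_apply, Fintype.sum_bool, c, w, Pi.add_apply, Pi.smul_apply,
      smul_eq_mul]
    norm_num [sub_eq_add_neg]
  have hdet1 : (Matrix.of fun i j : Fin g =>
        q (i.val + 1) ^ (j.val) - f (i.val + 1) * p (i.val + 1) ^ (j.val)).det =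
      ∑ r : Fin g → Bool, (∏ i, c i (r i)) * (Matrix.vandermonde (y r)).det := by
    show (Matrix.detRowAlternating (R := ℂ) (n := Fin g)).toMultilinearMap _ = _
    rw [show (Matrix.of fun i j : Fin g =>
        q (i.val + 1) ^ (j.val) - f (i.val + 1) * p (i.val + 1) ^ (j.val)) =
      (fun i => ∑ b : Bool, c i b • w i b) from funext hrows]
    rw [MultilinearMap.map_sum]
    refine Finset.sum_congr rfl fun r _ => ?_
    rw [MultilinearMap.map_smul_univ, smul_eq_mul]
    congr 1
  rw [hdet1]
  refine Finset.sum_nbij' (toS g) (fun S => (fun i : Fin g => decide ((i:ℕ)+1 ∉ S)))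
    ?_ ?_ ?_ ?_ ?_
  · intro r _
    rw [Finset.mem_powerset]
    intro k hk
    simp only [toS, Finset.mem_image, Finset.mem_filter] at hk
    obtain ⟨a, _, rfl⟩ := hk
    simp only [Finset.mem_Icc]
    have := a.isLt; omega
  · intro S _; exact Finset.mem_univ _
  · intro r _
    funext i
    have hm := mem_toS g r i
    cases hri : r i <;> simp_all
  · intro S hS
    rw [Finset.mem_powerset] at hS
    ext k
    simp only [toS, Finset.mem_image, Finset.mem_filter, Finset.mem_univ, true_and,
      decide_eq_false_iff_not, not_not]
    constructor
    · rintro ⟨a, ha, rfl⟩; exact ha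
    · intro hk
      have hk' := hS hk
      rw [Finset.mem_Icc] at hk'
      refine ⟨⟨k-1, by omega⟩, ?_, by simp; omega⟩
      simpa only [show k - 1 + 1 = k from by omega] using hk
  · intro r _
    rw [Matrix.det_vandermonde]
    have hxy : ∀ i : Fin g, xv p q (toS g r) ((i:ℕ)+1) = y r i := by
      intro i
      have hm := mem_toS g r i
      cases hri : r i <;> simp_all [xv, y]
    have h2 : (∏ i : Fin g, ∏ j ∈ Finset.Ioi i, (y r j - y r i)) =
        ∏ a ∈ Finset.Icc 1 g, ∏ b ∈ Finset.Ico 1 a,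
          (xv p q (toS g r) a - xv p q (toS g r) b) := by
      rw [← pair_prod g (fun a b => xv p q (toS g r) a - xv p q (toS g r) b)]
      exact Finset.prod_congr rfl fun i _ => Finset.prod_congr rfl fun j _ => by
        rw [hxy, hxy]
    have h1 : (∏ i : Fin g, c i (r i)) = ∏ j ∈ toS g r, -f j := by
      rw [toS, Finset.prod_image]
      · rw [← Finset.prod_filter_mul_prod_filter_not Finset.univ (fun i => r i = false)
          (fun i => c i (r i))]
        have ha : ∀ i ∈ Finset.univ.filter (fun i : Fin g => r i = false),
            c i (r i) = -f ((i:ℕ)+1) := by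
          intro i hi
          simp only [Finset.mem_filter] at hi
          rw [hi.2]; simp [hc]
        have hb : (∏ i ∈ Finset.univ.filter (fun i : Fin g => ¬ r i = false),
            c i (r i)) = 1 := by
          refine Finset.prod_eq_one fun i hi => ?_
          simp only [Finset.mem_filter, Bool.not_eq_false] at hi
          rw [hi.2]; simp [hc]
        rw [Finset.prod_congr rfl ha, hb, mul_one]
      · intro x _ y' _ hxy'; exact Fin.ext (by beta_reduce at hxy'; omega)
    rw [h1, h2]

/-- Casoratti determinant representation of `H^{(g)}`. -/
theorem H_casoratti (p q : ℕ → ℂ) (g : ℕ)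
    (hdist : ∀ i ∈ Finset.Icc 1 g, ∀ j ∈ Finset.Icc 1 g,
      (i ≠ j → p i ≠ p j ∧ q i ≠ q j) ∧ p i ≠ q j)
    (f : ℕ → ℂ) :
    Hfun p q g f =
      (Matrix.of fun i j : Fin g =>
          q (j.val + 1) ^ (i.val) - f (j.val + 1) * p (j.val + 1) ^ (i.val)).det /
        ∏ i ∈ Finset.Icc 1 g, ∏ j ∈ Finset.Ico 1 i, (q i - q j) := by
  have hq : ∀ i ∈ Finset.Icc 1 g, ∀ j ∈ Finset.Icc 1 g, i ≠ j → q i ≠ q j :=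
    fun i hi j hj hij => ((hdist i hi j hj).1 hij).2
  have hpq : ∀ i ∈ Finset.Icc 1 g, ∀ j ∈ Finset.Icc 1 g, p i ≠ q j :=
    fun i hi j hj => (hdist i hi j hj).2
  rw [Hfun_sum p q g hq hpq f, det_sum p q g f, Finset.sum_div]
  refine Finset.sum_congr rfl fun S hS => ?_
  rw [mul_div_assoc]
  congr 1
  simp only [Finset.prod_div_distrib]
end

section
/- With H^{(g)}, σ_n as above, for any λ, z_1, ..., z_g ∈ C (generic): H^{(g)}({f_n = σ_n(λ) ∏_{m=1}^g σ_n(z_m)^{-1}}_{n=1}^g) = (∏_{m=1}^g (λ − z_m)/(λ − q_m)) · H^{(g)}({f_n = ∏_{m=1}^g σ_n(z_m)^{-1}}_{n=1}^g) (prime form identity). -/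
open Complex

open Polynomial Topology Filter

lemma Hfun_congr (p q : ℕ → ℂ) : ∀ (g : ℕ) (f f' : ℕ → ℂ),
    (∀ n ∈ Finset.Icc 1 g, f n = f' n) → Hfun p q g f = Hfun p q g f' := by
  intro g
  induction g with
  | zero => intro f f' _; rfl
  | succ g ih =>
    intro f f' h
    have hmem : ∀ n ∈ Finset.Icc 1 g, n ∈ Finset.Icc 1 (g+1) := by
      intro n hn; simp only [Finset.mem_Icc] at *; omega
    have hg1 : g + 1 ∈ Finset.Icc 1 (g+1) := by simp
    simp only [Hfun]
    rw [ih (fun n => f n * sigma p q n (q (g+1))) (fun n => f' n * sigma p q n (q (g+1)))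
          (fun n hn => by rw [h n (hmem n hn)]),
        ih (fun n => f n * sigma p q n (p (g+1))) (fun n => f' n * sigma p q n (p (g+1)))
          (fun n hn => by rw [h n (hmem n hn)]), h _ hg1]

lemma Hfun_continuousAt (p q : ℕ → ℂ) : ∀ (g : ℕ) (F : ℂ → ℕ → ℂ) (t0 : ℂ),
    (∀ n ∈ Finset.Icc 1 g, ContinuousAt (fun t => F t n) t0) →
    ContinuousAt (fun t => Hfun p q g (F t)) t0 := by
  intro g
  induction g with
  | zero => intro F t0 _; simp only [Hfun]; exact continuousAt_const
  | succ g ih =>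
    intro F t0 h
    have hmem : ∀ n ∈ Finset.Icc 1 g, n ∈ Finset.Icc 1 (g+1) := by
      intro n hn; simp only [Finset.mem_Icc] at *; omega
    have hg1 : g + 1 ∈ Finset.Icc 1 (g+1) := by simp
    simp only [Hfun]
    exact ((ih (fun t n => F t n * sigma p q n (q (g+1))) t0
        (fun n hn => ((h n (hmem n hn)).mul continuousAt_const))).sub
      ((((h _ hg1).mul continuousAt_const)).mul
        (ih (fun t n => F t n * sigma p q n (p (g+1))) t0
          (fun n hn => ((h n (hmem n hn)).mul continuousAt_const)))))

lemma Hfun_poly (p q : ℕ → ℂ) : ∀ (g : ℕ) (f : ℕ → ℂ),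
    ∃ P : Polynomial ℂ, P.natDegree ≤ g ∧ P.coeff g = (-1)^g * Hfun p q g f ∧
      ∀ lam : ℂ, (∀ n ∈ Finset.Icc 1 g, lam ≠ q n) →
        P.eval lam = Hfun p q g (fun n => f n * sigma p q n lam) *
          ∏ m ∈ Finset.Icc 1 g, (q m - lam) := by
  intro g
  induction g with
  | zero =>
    intro f
    refine ⟨1, by simp, by simp [Hfun], ?_⟩
    intro lam _
    simp [Hfun]
  | succ g ih =>
    intro f
    obtain ⟨P1, hd1, hc1, he1⟩ := ih (fun n => f n * sigma p q n (q (g+1)))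
    obtain ⟨P2, hd2, hc2, he2⟩ := ih (fun n => f n * sigma p q n (p (g+1)))
    set c : ℂ := f (g+1) * ∏ m ∈ Finset.Icc 1 g, sigma p q (g+1) (q m) with hc
    refine ⟨P1 * (C (q (g+1)) - X) - C c * P2 * (C (p (g+1)) - X), ?_, ?_, ?_⟩
    · apply le_trans (natDegree_sub_le _ _)
      have h1 : (P1 * (C (q (g+1)) - X)).natDegree ≤ g + 1 := by
        apply le_trans (natDegree_mul_le)
        have : (C (q (g+1)) - X).natDegree ≤ 1 := by
          apply le_trans (natDegree_sub_le _ _); simp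
        omega
      have h2 : (C c * P2 * (C (p (g+1)) - X)).natDegree ≤ g + 1 := by
        apply le_trans (natDegree_mul_le)
        have h2a : (C c * P2).natDegree ≤ g := by
          apply le_trans (natDegree_mul_le); simp [natDegree_C]; omega
        have : (C (p (g+1)) - X).natDegree ≤ 1 := by
          apply le_trans (natDegree_sub_le _ _); simp
        omega
      omega
    · have key : ∀ (Q : Polynomial ℂ) (a : ℂ), Q.natDegree ≤ g →
          (Q * (C a - X)).coeff (g+1) = - Q.coeff g := by
        intro Q a hQ
        rw [mul_sub, coeff_sub, mul_comm, coeff_C_mul, coeff_mul_X]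
        have : Q.coeff (g+1) = 0 := coeff_eq_zero_of_natDegree_lt (by omega)
        rw [this]; ring
      rw [coeff_sub, key P1 _ hd1, mul_assoc]
      have hCc : (C c * (P2 * (C (p (g+1)) - X))).coeff (g+1) = c * (P2 * (C (p (g+1)) - X)).coeff (g+1) := coeff_C_mul _
      rw [hCc, key P2 _ hd2, hc1, hc2]
      show -((-1)^g * Hfun p q g fun n => f n * sigma p q n (q (g + 1))) -
        c * -((-1)^g * Hfun p q g fun n => f n * sigma p q n (p (g + 1))) = _
      rw [show ((-1:ℂ))^(g+1) = -(-1)^g by ring]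
      simp only [Hfun, hc]
      ring
    · intro lam hlam
      have hq1 : lam ≠ q (g+1) := hlam (g+1) (by simp)
      have hlam' : ∀ n ∈ Finset.Icc 1 g, lam ≠ q n := fun n hn =>
        hlam n (by simp only [Finset.mem_Icc] at *; omega)
      rw [Finset.prod_Icc_succ_top (by omega : 1 ≤ g + 1)]
      simp only [eval_sub, eval_mul, eval_sub, eval_C, eval_X]
      rw [he1 lam hlam', he2 lam hlam']
      simp only [Hfun]
      have hsig : sigma p q (g+1) lam * (q (g+1) - lam) = p (g+1) - lam := by
        unfold sigma
        field_simp [sub_ne_zero.mpr (Ne.symm hq1)]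
      have harg1 : (fun n => (f n * sigma p q n (q (g+1))) * sigma p q n lam)
          = (fun n => (f n * sigma p q n lam) * sigma p q n (q (g+1))) := by
        funext n; ring
      have harg2 : (fun n => (f n * sigma p q n (p (g+1))) * sigma p q n lam)
          = (fun n => (f n * sigma p q n lam) * sigma p q n (p (g+1))) := by
        funext n; ring
      rw [harg1, harg2]
      rw [← hsig]
      ring

lemma prod_Icc_one_eq_fin (h : ℕ → ℂ) : ∀ g : ℕ,
    ∏ m ∈ Finset.Icc 1 g, h m = ∏ m : Fin g, h (m.val + 1) := by
  intro g
  induction g with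
  | zero => simp
  | succ g ih =>
    rw [Finset.prod_Icc_succ_top (by omega : 1 ≤ g + 1), ih, Fin.prod_univ_castSucc]
    simp

/-- theta functions and prime forms,
`H^{(g)}({σ_n(λ) ∏_m σ_n(z_m)⁻¹}) = ∏_m (λ-z_m)/(λ-q_m) · H^{(g)}({∏_m σ_n(z_m)⁻¹})`. -/
theorem H_prime_form (p q : ℕ → ℂ) (g : ℕ)
    (hdist : ∀ i ∈ Finset.Icc 1 g, ∀ j ∈ Finset.Icc 1 g,
      (i ≠ j → p i ≠ p j ∧ q i ≠ q j) ∧ p i ≠ q j)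
    (lam : ℂ) (z : Fin g → ℂ)
    (hgen : ∀ n ∈ Finset.Icc 1 g,
      lam ≠ p n ∧ lam ≠ q n ∧ ∀ m : Fin g, z m ≠ p n ∧ z m ≠ q n) :
    Hfun p q g (fun n => sigma p q n lam * ∏ m : Fin g, (sigma p q n (z m))⁻¹) =
      (∏ m : Fin g, (lam - z m) / (lam - q (m.val + 1))) *
        Hfun p q g (fun n => ∏ m : Fin g, (sigma p q n (z m))⁻¹) := by
  induction g generalizing lam with
  | zero => simp [Hfun]
  | succ g ih =>
    -- notation
    have hdist' : ∀ i ∈ Finset.Icc 1 g, ∀ j ∈ Finset.Icc 1 g,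
        (i ≠ j → p i ≠ p j ∧ q i ≠ q j) ∧ p i ≠ q j := by
      intro i hi j hj
      simp only [Finset.mem_Icc] at hi hj
      exact hdist i (by simp only [Finset.mem_Icc]; omega) j (by simp only [Finset.mem_Icc]; omega)
    -- Step 1 : vanish
    have vanish : ∀ w : Fin g → ℂ,
        (∀ n ∈ Finset.Icc 1 (g+1), ∀ m : Fin g, w m ≠ p n ∧ w m ≠ q n) →
        Hfun p q (g+1) (fun n => ∏ m : Fin g, (sigma p q n (w m))⁻¹) = 0 := by
      intro w hw
      have hgenq : ∀ n ∈ Finset.Icc 1 g,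
          q (g+1) ≠ p n ∧ q (g+1) ≠ q n ∧ ∀ m : Fin g, w m ≠ p n ∧ w m ≠ q n := by
        intro n hn
        simp only [Finset.mem_Icc] at hn
        have h1 := hdist n (by simp only [Finset.mem_Icc]; omega) (g+1) (by simp only [Finset.mem_Icc]; omega)
        have h2 := hdist (g+1) (by simp only [Finset.mem_Icc]; omega) n (by simp only [Finset.mem_Icc]; omega)
        exact ⟨(h1.2).symm, (h2.1 (by omega)).2, fun m => hw n (by simp only [Finset.mem_Icc]; omega) m⟩
      have hgenp : ∀ n ∈ Finset.Icc 1 g,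
          p (g+1) ≠ p n ∧ p (g+1) ≠ q n ∧ ∀ m : Fin g, w m ≠ p n ∧ w m ≠ q n := by
        intro n hn
        simp only [Finset.mem_Icc] at hn
        have h2 := hdist (g+1) (by simp only [Finset.mem_Icc]; omega) n (by simp only [Finset.mem_Icc]; omega)
        exact ⟨(h2.1 (by omega)).1, h2.2, fun m => hw n (by simp only [Finset.mem_Icc]; omega) m⟩
      simp only [Hfun]
      have e1 : (fun n => (∏ m : Fin g, (sigma p q n (w m))⁻¹) * sigma p q n (q (g+1)))
          = (fun n => sigma p q n (q (g+1)) * ∏ m : Fin g, (sigma p q n (w m))⁻¹) := by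
        funext n; ring
      have e2 : (fun n => (∏ m : Fin g, (sigma p q n (w m))⁻¹) * sigma p q n (p (g+1)))
          = (fun n => sigma p q n (p (g+1)) * ∏ m : Fin g, (sigma p q n (w m))⁻¹) := by
        funext n; ring
      rw [e1, e2, ih hdist' (q (g+1)) w hgenq, ih hdist' (p (g+1)) w hgenp,
          prod_Icc_one_eq_fin (fun m => sigma p q (g+1) (q m)) g]
      have key : (∏ m : Fin g, (q (g+1) - w m) / (q (g+1) - q (m.val + 1)))
          = ((∏ m : Fin g, (sigma p q (g+1) (w m))⁻¹) *
              ∏ m : Fin g, sigma p q (g+1) (q (m.val + 1))) *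
            ∏ m : Fin g, (p (g+1) - w m) / (p (g+1) - q (m.val + 1)) := by
        rw [← Finset.prod_mul_distrib, ← Finset.prod_mul_distrib]
        apply Finset.prod_congr rfl
        intro m _
        have hm1 : m.val + 1 ∈ Finset.Icc 1 (g+1) := by
          simp only [Finset.mem_Icc]; omega
        have hG : g + 1 ∈ Finset.Icc 1 (g+1) := by simp only [Finset.mem_Icc]; omega
        have hd := hdist (g+1) hG (m.val+1) hm1
        have hne : (g+1 : ℕ) ≠ m.val + 1 := by omega
        have hqq : q (g+1) - q (m.val+1) ≠ 0 := sub_ne_zero.mpr (hd.1 hne).2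
        have hpq : p (g+1) - q (m.val+1) ≠ 0 := sub_ne_zero.mpr hd.2
        have hpw : p (g+1) - w m ≠ 0 := sub_ne_zero.mpr (Ne.symm ((hw (g+1) hG m).1))
        have hqw : q (g+1) - w m ≠ 0 := sub_ne_zero.mpr (Ne.symm ((hw (g+1) hG m).2))
        unfold sigma
        rw [inv_div]
        field_simp
      rw [key]
      ring
    -- Step 2 : distinct z case
    have distinct_case : ∀ (lam : ℂ) (z : Fin (g+1) → ℂ), Function.Injective z →
        (∀ n ∈ Finset.Icc 1 (g+1),
          lam ≠ p n ∧ lam ≠ q n ∧ ∀ m : Fin (g+1), z m ≠ p n ∧ z m ≠ q n) →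
        Hfun p q (g+1) (fun n => sigma p q n lam * ∏ m : Fin (g+1), (sigma p q n (z m))⁻¹) =
          (∏ m : Fin (g+1), (lam - z m) / (lam - q (m.val + 1))) *
            Hfun p q (g+1) (fun n => ∏ m : Fin (g+1), (sigma p q n (z m))⁻¹) := by
      clear hgen lam z
      intro lamd zd hinj hgen
      set B : ℕ → ℂ := fun n => ∏ m : Fin (g+1), (sigma p q n (zd m))⁻¹ with hB
      obtain ⟨P, hPdeg, hPcoeff, hPeval⟩ := Hfun_poly p q (g+1) B
      set K : ℂ := Hfun p q (g+1) B with hK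
      set Q : Polynomial ℂ := C K * ∏ m : Fin (g+1), (C (zd m) - X) with hQ
      set M : Polynomial ℂ := ∏ m : Fin (g+1), (X - C (zd m)) with hM
      have hMmonic : M.Monic := monic_prod_of_monic _ _ (fun m _ => monic_X_sub_C (zd m))
      have hMdeg : M.natDegree = g + 1 := by
        rw [hM, natDegree_prod_of_monic _ _ (fun m _ => monic_X_sub_C (zd m))]
        simp [natDegree_X_sub_C]
      have hprodC : (∏ m : Fin (g+1), (C (zd m) - X)) = C ((-1:ℂ)^(g+1)) * M := by
        rw [Finset.prod_congr rfl
              (fun (m : Fin (g+1)) _ => show C (zd m) - X = C (-1:ℂ) * (X - C (zd m)) by rw [map_neg, map_one]; ring),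
            Finset.prod_mul_distrib, Finset.prod_const, Finset.card_univ, Fintype.card_fin,
            map_pow, ← hM]
      have hQcoeff : Q.coeff (g+1) = (-1:ℂ)^(g+1) * K := by
        rw [hQ, hprodC, ← mul_assoc, ← map_mul, coeff_C_mul, ← hMdeg,
            Monic.coeff_natDegree hMmonic, mul_one, mul_comm]
      have hQdeg : Q.natDegree ≤ g + 1 := by
        rw [hQ, hprodC, ← mul_assoc, ← map_mul]
        apply le_trans natDegree_mul_le
        rw [natDegree_C, hMdeg]
        omega
      have hevalP : ∀ k : Fin (g+1), P.eval (zd k) = 0 := by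
        intro k
        have hzq : ∀ n ∈ Finset.Icc 1 (g+1), zd k ≠ q n := fun n hn => ((hgen n hn).2.2 k).2
        rw [hPeval (zd k) hzq]
        have hz := vanish (fun m => zd (k.succAbove m))
          (fun n hn m => (hgen n hn).2.2 (k.succAbove m))
        have hcongr : Hfun p q (g+1) (fun n => B n * sigma p q n (zd k)) =
            Hfun p q (g+1) (fun n => ∏ m : Fin g, (sigma p q n (zd (k.succAbove m)))⁻¹) := by
          apply Hfun_congr
          intro n hn
          have h1 := (hgen n hn).2.2 k
          have hs0 : sigma p q n (zd k) ≠ 0 :=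
            div_ne_zero (sub_ne_zero.mpr (Ne.symm h1.1)) (sub_ne_zero.mpr (Ne.symm h1.2))
          rw [hB]
          dsimp only
          rw [Fin.prod_univ_succAbove (fun m => (sigma p q n (zd m))⁻¹) k,
              mul_comm ((sigma p q n (zd k))⁻¹) _, mul_assoc, inv_mul_cancel₀ hs0, mul_one]
        rw [hcongr, hz, zero_mul]
      have hevalQ : ∀ k : Fin (g+1), Q.eval (zd k) = 0 := by
        intro k
        rw [hQ, eval_mul, eval_prod]
        rw [Finset.prod_eq_zero (Finset.mem_univ k) (by simp)]
        ring
      have hPQ : P = Q := by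
        rw [← sub_eq_zero]
        by_cases hD0 : P - Q = 0
        · exact hD0
        apply Polynomial.eq_zero_of_natDegree_lt_card_of_eval_eq_zero (P - Q) hinj
          (fun k => by rw [eval_sub, hevalP k, hevalQ k, sub_zero])
        rw [Fintype.card_fin]
        have hle : (P - Q).natDegree ≤ g + 1 :=
          le_trans (natDegree_sub_le _ _) (by omega)
        have hco : (P - Q).coeff (g+1) = 0 := by
          rw [coeff_sub, hPcoeff, hQcoeff, hK]; ring
        rcases lt_or_eq_of_le hle with h | h
        · exact h
        · exfalso
          apply hD0
          apply Polynomial.leadingCoeff_eq_zero.mp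
          rw [Polynomial.leadingCoeff, h, hco]
      have hlamq : ∀ n ∈ Finset.Icc 1 (g+1), lamd ≠ q n := fun n hn => (hgen n hn).2.1
      have hmain := hPeval lamd hlamq
      rw [hPQ] at hmain
      have hQe : Q.eval lamd = K * ∏ m : Fin (g+1), (zd m - lamd) := by
        rw [hQ, eval_mul, eval_prod, eval_C]
        congr 1
        apply Finset.prod_congr rfl
        intro m _
        simp
      rw [hQe, prod_Icc_one_eq_fin (fun m => q m - lamd) (g+1)] at hmain
      have e1 : ∏ m : Fin (g+1), (q (m.val+1) - lamd)
          = (-1:ℂ)^(g+1) * ∏ m : Fin (g+1), (lamd - q (m.val+1)) := by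
        rw [Finset.prod_congr rfl (fun (m : Fin (g+1)) _ =>
              show q (m.val+1) - lamd = (-1:ℂ) * (lamd - q (m.val+1)) by ring),
            Finset.prod_mul_distrib, Finset.prod_const, Finset.card_univ, Fintype.card_fin]
      have e2 : ∏ m : Fin (g+1), (zd m - lamd)
          = (-1:ℂ)^(g+1) * ∏ m : Fin (g+1), (lamd - zd m) := by
        rw [Finset.prod_congr rfl (fun (m : Fin (g+1)) _ =>
              show zd m - lamd = (-1:ℂ) * (lamd - zd m) by ring),
            Finset.prod_mul_distrib, Finset.prod_const, Finset.card_univ, Fintype.card_fin]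
      rw [e1, e2] at hmain
      have hm1 : ((-1:ℂ)^(g+1)) ≠ 0 := pow_ne_zero _ (neg_ne_zero.mpr one_ne_zero)
      have hmain2 : Hfun p q (g+1) (fun n => B n * sigma p q n lamd) *
          (∏ m : Fin (g+1), (lamd - q (m.val+1)))
          = K * ∏ m : Fin (g+1), (lamd - zd m) := by
        apply mul_left_cancel₀ hm1
        linear_combination -hmain
      have hqne : ∀ m : Fin (g+1), lamd - q (m.val+1) ≠ 0 := by
        intro m
        exact sub_ne_zero.mpr ((hgen (m.val+1) (by simp only [Finset.mem_Icc]; omega)).2.1)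
      have hprodne : (∏ m : Fin (g+1), (lamd - q (m.val+1))) ≠ 0 :=
        Finset.prod_ne_zero_iff.mpr (fun m _ => hqne m)
      have hfun_eq : (fun n => sigma p q n lamd * ∏ m : Fin (g+1), (sigma p q n (zd m))⁻¹)
          = (fun n => B n * sigma p q n lamd) := by
        funext n; rw [hB]; dsimp only; rw [mul_comm]
      rw [hfun_eq, Finset.prod_div_distrib, div_mul_eq_mul_div, eq_div_iff hprodne]
      linear_combination hmain2
    -- Step 3 : continuity
    set Z : ℂ → Fin (g+1) → ℂ := fun t m => z m + t * ((m.val : ℂ) + 1) with hZ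
    have hc_ne : ∀ m m' : Fin (g+1), m ≠ m' → ((m.val : ℂ) + 1) ≠ ((m'.val : ℂ) + 1) := by
      intro m m' hne h
      apply hne
      have h2 : ((m.val : ℂ)) = ((m'.val : ℂ)) := by linear_combination h
      exact Fin.ext (Nat.cast_injective h2)
    have hfin1 : ∀ (a b cc d : ℂ), cc ≠ d → {t : ℂ | a + t*cc = b + t*d}.Finite := by
      intro a b cc d hne
      apply Set.Subsingleton.finite
      intro x hx y hy
      simp only [Set.mem_setOf_eq] at hx hy
      have h0 : (x - y) * (cc - d) = 0 := by linear_combination hx - hy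
      rcases mul_eq_zero.mp h0 with h | h
      · exact sub_eq_zero.mp h
      · exact absurd (sub_eq_zero.mp h) hne
    set bad : Set ℂ :=
      (⋃ (mp : Fin (g+1) × Fin (g+1)), {t | mp.1 ≠ mp.2 ∧ Z t mp.1 = Z t mp.2}) ∪
      (⋃ (mn : Fin (g+1) × (Finset.Icc 1 (g+1) : Finset ℕ)),
        ({t | Z t mn.1 = p mn.2} ∪ {t | Z t mn.1 = q mn.2})) with hbad
    have hbadfin : bad.Finite := by
      apply Set.Finite.union
      · apply Set.finite_iUnion
        intro mp
        by_cases hmm : mp.1 = mp.2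
        · have he : {t : ℂ | mp.1 ≠ mp.2 ∧ Z t mp.1 = Z t mp.2} = ∅ := by
            ext t; simp [hmm]
          rw [he]; exact Set.finite_empty
        · apply Set.Finite.subset
            (hfin1 (z mp.1) (z mp.2) ((mp.1.val : ℂ) + 1) ((mp.2.val : ℂ) + 1) (hc_ne _ _ hmm))
          intro t ht
          exact ht.2
      · apply Set.finite_iUnion
        intro mn
        apply Set.Finite.union
        · have hcne : ((mn.1.val : ℂ) + 1) ≠ 0 := by
            intro h
            have : ((mn.1.val : ℂ)) = -1 := by linear_combination h
            have h2 : ((mn.1.val : ℝ)) = -1 := by exact_mod_cast this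
            have h3 : (0:ℝ) ≤ (mn.1.val : ℝ) := Nat.cast_nonneg _
            linarith
          apply Set.Finite.subset (hfin1 (z mn.1) (p mn.2) ((mn.1.val : ℂ) + 1) 0 hcne)
          intro t ht
          simp only [Set.mem_setOf_eq] at *
          rw [mul_zero, add_zero]
          exact ht
        · have hcne : ((mn.1.val : ℂ) + 1) ≠ 0 := by
            intro h
            have : ((mn.1.val : ℂ)) = -1 := by linear_combination h
            have h2 : ((mn.1.val : ℝ)) = -1 := by exact_mod_cast this
            have h3 : (0:ℝ) ≤ (mn.1.val : ℝ) := Nat.cast_nonneg _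
            linarith
          apply Set.Finite.subset (hfin1 (z mn.1) (q mn.2) ((mn.1.val : ℂ) + 1) 0 hcne)
          intro t ht
          simp only [Set.mem_setOf_eq] at *
          rw [mul_zero, add_zero]
          exact ht
    have key : ∀ t : ℂ, t ∈ badᶜ →
        Hfun p q (g+1) (fun n => sigma p q n lam * ∏ m : Fin (g+1), (sigma p q n (Z t m))⁻¹) =
          (∏ m : Fin (g+1), (lam - Z t m) / (lam - q (m.val + 1))) *
            Hfun p q (g+1) (fun n => ∏ m : Fin (g+1), (sigma p q n (Z t m))⁻¹) := by
      intro t ht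
      simp only [hbad, Set.mem_compl_iff, Set.mem_union, Set.mem_iUnion, Set.mem_setOf_eq,
        not_or, not_exists] at ht
      apply distinct_case lam (Z t)
      · intro m m' hmm'
        by_contra hne
        exact (ht.1 (m, m')) ⟨hne, hmm'⟩
      · intro n hn
        refine ⟨(hgen n hn).1, (hgen n hn).2.1, ?_⟩
        intro m
        have h2 := ht.2 (m, ⟨n, hn⟩)
        simp only [Set.mem_setOf_eq] at h2
        exact ⟨fun h => h2.1 h, fun h => h2.2 h⟩
    -- continuity of both sides
    have hZcont : ∀ m : Fin (g+1), Continuous (fun t => Z t m) := by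
      intro m
      exact continuous_const.add (continuous_id.mul continuous_const)
    have hsig_cont : ∀ (n : ℕ), n ∈ Finset.Icc 1 (g+1) → ∀ (m : Fin (g+1)),
        ContinuousAt (fun t => (sigma p q n (Z t m))⁻¹) 0 := by
      intro n hn m
      have heq : (fun t => (sigma p q n (Z t m))⁻¹)
          = (fun t => (q n - Z t m) / (p n - Z t m)) := by
        funext t
        unfold sigma
        rw [inv_div]
      rw [heq]
      apply ContinuousAt.div
      · exact (continuous_const.sub (hZcont m)).continuousAt
      · exact (continuous_const.sub (hZcont m)).continuousAt
      · have hZ0 : Z 0 m = z m := by rw [hZ]; simp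
        rw [hZ0]
        exact sub_ne_zero.mpr (Ne.symm ((hgen n hn).2.2 m).1)
    have hLcont : ContinuousAt (fun t =>
        Hfun p q (g+1) (fun n => sigma p q n lam * ∏ m : Fin (g+1), (sigma p q n (Z t m))⁻¹)) 0 := by
      apply Hfun_continuousAt p q (g+1)
        (fun t n => sigma p q n lam * ∏ m : Fin (g+1), (sigma p q n (Z t m))⁻¹) 0
      intro n hn
      exact continuousAt_const.mul
        (tendsto_finset_prod Finset.univ (fun m _ => hsig_cont n hn m))
    have hRcont : ContinuousAt (fun t =>
        (∏ m : Fin (g+1), (lam - Z t m) / (lam - q (m.val + 1))) *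
          Hfun p q (g+1) (fun n => ∏ m : Fin (g+1), (sigma p q n (Z t m))⁻¹)) 0 := by
      apply ContinuousAt.mul
      · apply tendsto_finset_prod Finset.univ
        intro m _
        apply ContinuousAt.div
        · exact (continuous_const.sub (hZcont m)).continuousAt
        · exact continuousAt_const
        · exact sub_ne_zero.mpr ((hgen (m.val + 1) (by simp only [Finset.mem_Icc]; omega)).2.1)
      · apply Hfun_continuousAt p q (g+1)
          (fun t n => ∏ m : Fin (g+1), (sigma p q n (Z t m))⁻¹) 0
        intro n hn
        exact tendsto_finset_prod Finset.univ (fun m _ => hsig_cont n hn m)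
    have hdense : Dense badᶜ := hbadfin.countable.dense_compl ℂ
    have h0cl : (0:ℂ) ∈ closure badᶜ := hdense 0
    have hneb : (𝓝[badᶜ] (0:ℂ)).NeBot := mem_closure_iff_nhdsWithin_neBot.mp h0cl
    have tL := (hLcont.tendsto).mono_left (nhdsWithin_le_nhds (s := badᶜ))
    have tR := (hRcont.tendsto).mono_left (nhdsWithin_le_nhds (s := badᶜ))
    have heqf : (fun t =>
        Hfun p q (g+1) (fun n => sigma p q n lam * ∏ m : Fin (g+1), (sigma p q n (Z t m))⁻¹))
        =ᶠ[𝓝[badᶜ] (0:ℂ)] (fun t =>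
        (∏ m : Fin (g+1), (lam - Z t m) / (lam - q (m.val + 1))) *
          Hfun p q (g+1) (fun n => ∏ m : Fin (g+1), (sigma p q n (Z t m))⁻¹)) :=
      Filter.eventuallyEq_of_mem self_mem_nhdsWithin (fun t ht => key t ht)
    have tL' := tL.congr' heqf
    have final := tendsto_nhds_unique tL' tR
    have hZ0 : ∀ m : Fin (g+1), Z 0 m = z m := by
      intro m; rw [hZ]; simp
    simp only [hZ0] at final
    exact final
end

section
/- Rational Fay identity: with H^{(g)} and σ_n as above, for any A, B, C, D ∈ C (generic) and any {f_n}_{n=1}^g: (A−D)(C−B)·H^{(g)}({f_n σ_n(A)/σ_n(B)})·H^{(g)}({f_n σ_n(C)/σ_n(D)}) + (A−B)(D−C)·H^{(g)}({f_n σ_n(A)/σ_n(D)})·H^{(g)}({f_n σ_n(C)/σ_n(B)}) = (A−C)(D−B)·H^{(g)}({f_n})·H^{(g)}({f_n σ_n(A)σ_n(C)/(σ_n(B)σ_n(D))}). -/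
open Complex

open Finset

namespace FayAux

variable (p q : ℕ → ℂ)

/-- pair weight -/
noncomputable def tau (n m : ℕ) : ℂ :=
  if n < m then sigma p q n (p m) else if m < n then sigma p q n (q m) else 1

/-- subset weight -/
noncomputable def W (T S : Finset ℕ) : ℂ :=
  (∏ n ∈ S, ∏ m ∈ T \ S, sigma p q n (q m)) * ∏ n ∈ S, ∏ m ∈ S, tau p q n m

/-- closed form sum -/
noncomputable def HS (T : Finset ℕ) (f : ℕ → ℂ) : ℂ :=
  ∑ S ∈ T.powerset, (∏ n ∈ S, (-f n)) * W p q T S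

/-- the polynomial in `A` -/
noncomputable def HP (T : Finset ℕ) (f : ℕ → ℂ) : Polynomial ℂ :=
  ∑ S ∈ T.powerset, Polynomial.C ((∏ n ∈ S, (-f n)) * W p q T S) *
    ((∏ n ∈ S, (Polynomial.C (p n) - Polynomial.X)) *
      ∏ m ∈ T \ S, (Polynomial.C (q m) - Polynomial.X))

theorem HS_congr {T : Finset ℕ} {f h : ℕ → ℂ} (hfh : ∀ n ∈ T, f n = h n) :
    HS p q T f = HS p q T h := by
  unfold HS
  refine Finset.sum_congr rfl fun S hS => ?_
  rw [Finset.mem_powerset] at hS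
  congr 1
  exact Finset.prod_congr rfl fun n hn => by rw [hfh n (hS hn)]

theorem tau_self (n : ℕ) : tau p q n n = 1 := by simp [tau]

theorem tau_mul_tau {k m : ℕ} (hne : m ≠ k)
    (hsym : k < m → sigma p q k (p m) * sigma p q m (q k)
      = sigma p q m (p k) * sigma p q k (q m)) :
    tau p q k m * tau p q m k = sigma p q m (p k) * sigma p q k (q m) := by
  rcases lt_or_gt_of_ne hne with h | h
  · -- m < k
    simp only [tau, if_neg (not_lt.2 h.le), if_pos h, if_neg (not_lt.2 h.le)]
    ring
  · -- k < m
    simp only [tau, if_pos h, if_neg (not_lt.2 h.le)]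
    exact hsym h

theorem W_subset_erase {T S : Finset ℕ} {k : ℕ} (hk : k ∈ T) (hS : S ⊆ T.erase k) :
    W p q T S = W p q (T.erase k) S * ∏ n ∈ S, sigma p q n (q k) := by
  have hkS : k ∉ S := fun h => (Finset.mem_erase.1 (hS h)).1 rfl
  have hTS : T \ S = insert k ((T.erase k) \ S) := by
    ext x
    simp only [Finset.mem_sdiff, Finset.mem_insert, Finset.mem_erase]
    constructor
    · rintro ⟨hxT, hxS⟩
      by_cases hxk : x = k
      · exact Or.inl hxk
      · exact Or.inr ⟨⟨hxk, hxT⟩, hxS⟩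
    · rintro (rfl | ⟨⟨_, hxT⟩, hxS⟩)
      · exact ⟨hk, hkS⟩
      · exact ⟨hxT, hxS⟩
  have hknot : k ∉ (T.erase k) \ S := by simp
  unfold W
  rw [hTS]
  rw [Finset.prod_congr rfl fun n _ => Finset.prod_insert hknot]
  rw [Finset.prod_mul_distrib]
  ring

theorem W_insert {T S : Finset ℕ} {k : ℕ} (hk : k ∈ T) (hS : S ⊆ T.erase k)
    (hsym : ∀ m ∈ T.erase k, k < m → sigma p q k (p m) * sigma p q m (q k)
      = sigma p q m (p k) * sigma p q k (q m)) :
    W p q T (insert k S) = W p q (T.erase k) S *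
      ((∏ m ∈ (T.erase k) \ S, sigma p q k (q m)) *
        ∏ m ∈ S, (sigma p q m (p k) * sigma p q k (q m))) := by
  have hkS : k ∉ S := fun h => (Finset.mem_erase.1 (hS h)).1 rfl
  have hTS : T \ insert k S = (T.erase k) \ S := by
    ext x
    simp only [Finset.mem_sdiff, Finset.mem_insert, Finset.mem_erase]
    tauto
  unfold W
  rw [hTS, Finset.prod_insert hkS]
  have hpair : ∏ n ∈ insert k S, ∏ m ∈ insert k S, tau p q n m
      = (∏ n ∈ S, ∏ m ∈ S, tau p q n m) * ∏ m ∈ S, (sigma p q m (p k) * sigma p q k (q m)) := by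
    rw [Finset.prod_insert hkS]
    rw [Finset.prod_insert hkS, tau_self]
    rw [Finset.prod_congr rfl fun n (hn : n ∈ S) => Finset.prod_insert hkS]
    rw [Finset.prod_mul_distrib]
    rw [← Finset.prod_mul_distrib]
    have : ∏ m ∈ S, (tau p q k m * tau p q m k)
        = ∏ m ∈ S, (sigma p q m (p k) * sigma p q k (q m)) := by
      refine Finset.prod_congr rfl fun m hm => ?_
      have hmT : m ∈ T.erase k := hS hm
      exact tau_mul_tau p q (Finset.mem_erase.1 hmT).1 (hsym m hmT)
    rw [Finset.prod_congr rfl fun m (hm : m ∈ S) => mul_comm (tau p q k m) (tau p q m k)] at this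
    -- adjust
    calc 1 * (∏ m ∈ S, tau p q k m) * ∏ n ∈ S, (tau p q n k * ∏ m ∈ S, tau p q n m)
        = (∏ n ∈ S, ∏ m ∈ S, tau p q n m) * ∏ m ∈ S, (tau p q m k * tau p q k m) := by
          rw [Finset.prod_mul_distrib, Finset.prod_mul_distrib]; ring
      _ = _ := by rw [this]
  rw [hpair]
  ring

end FayAux

namespace Part2
open FayAux
variable (p q : ℕ → ℂ)

theorem HS_erase {T : Finset ℕ} {k : ℕ} (hk : k ∈ T)
    (hsym : ∀ m ∈ T.erase k, k < m → sigma p q k (p m) * sigma p q m (q k)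
      = sigma p q m (p k) * sigma p q k (q m)) (f : ℕ → ℂ) :
    HS p q T f = HS p q (T.erase k) (fun n => f n * sigma p q n (q k)) -
      f k * (∏ m ∈ T.erase k, sigma p q k (q m)) *
        HS p q (T.erase k) (fun n => f n * sigma p q n (p k)) := by
  have hkT' : k ∉ T.erase k := Finset.notMem_erase k T
  conv_lhs => rw [HS, ← Finset.insert_erase hk]
  rw [Finset.sum_powerset_insert hkT', Finset.insert_erase hk]
  have e1 : ∑ S ∈ (T.erase k).powerset, (∏ n ∈ S, -f n) * W p q T S
      = HS p q (T.erase k) (fun n => f n * sigma p q n (q k)) := by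
    rw [HS]
    refine Finset.sum_congr rfl fun S hS => ?_
    rw [Finset.mem_powerset] at hS
    rw [W_subset_erase p q hk hS]
    have h1 : ∏ n ∈ S, -(f n * sigma p q n (q k))
        = (∏ n ∈ S, -f n) * ∏ n ∈ S, sigma p q n (q k) := by
      rw [← Finset.prod_mul_distrib]
      exact Finset.prod_congr rfl fun n _ => by ring
    rw [h1]
    ring
  have e2 : ∑ S ∈ (T.erase k).powerset, (∏ n ∈ insert k S, -f n) * W p q T (insert k S)
      = -(f k * (∏ m ∈ T.erase k, sigma p q k (q m)) *
          HS p q (T.erase k) (fun n => f n * sigma p q n (p k))) := by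
    rw [HS, Finset.mul_sum, ← Finset.sum_neg_distrib]
    refine Finset.sum_congr rfl fun S hS => ?_
    rw [Finset.mem_powerset] at hS
    have hkS : k ∉ S := fun h => (Finset.mem_erase.1 (hS h)).1 rfl
    rw [Finset.prod_insert hkS, W_insert p q hk hS hsym]
    have h1 : ∏ n ∈ S, -(f n * sigma p q n (p k))
        = (∏ n ∈ S, -f n) * ∏ n ∈ S, sigma p q n (p k) := by
      rw [← Finset.prod_mul_distrib]
      exact Finset.prod_congr rfl fun n _ => by ring
    have h2 : (∏ m ∈ T.erase k \ S, sigma p q k (q m)) * ∏ m ∈ S, sigma p q k (q m)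
        = ∏ m ∈ T.erase k, sigma p q k (q m) := Finset.prod_sdiff hS
    rw [h1, ← h2, Finset.prod_mul_distrib]
    ring
  rw [e1, e2]
  ring

theorem Hfun_eq_HS (g : ℕ) (f : ℕ → ℂ) : Hfun p q g f = HS p q (Finset.Icc 1 g) f := by
  induction g generalizing f with
  | zero =>
    have h0 : Finset.Icc 1 0 = (∅ : Finset ℕ) := by
      apply Finset.Icc_eq_empty; omega
    simp [Hfun, HS, h0, W]
  | succ g ih =>
    have hk : g + 1 ∈ Finset.Icc 1 (g + 1) := by
      simp [Finset.mem_Icc]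
    have herase : (Finset.Icc 1 (g + 1)).erase (g + 1) = Finset.Icc 1 g := by
      ext x
      simp only [Finset.mem_erase, Finset.mem_Icc]
      omega
    have hsym : ∀ m ∈ (Finset.Icc 1 (g+1)).erase (g+1), (g+1) < m →
        sigma p q (g+1) (p m) * sigma p q m (q (g+1))
          = sigma p q m (p (g+1)) * sigma p q (g+1) (q m) := by
      intro m hm hlt
      rw [herase, Finset.mem_Icc] at hm
      omega
    rw [show Hfun p q (g+1) f = Hfun p q g (fun n => f n * sigma p q n (q (g + 1))) -
        f (g + 1) * (∏ m ∈ Finset.Icc 1 g, sigma p q (g + 1) (q m)) *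
          Hfun p q g (fun n => f n * sigma p q n (p (g + 1))) from rfl]
    rw [ih, ih, HS_erase p q hk hsym f, herase]

theorem HP_natDegree (T : Finset ℕ) (f : ℕ → ℂ) : (HP p q T f).natDegree ≤ T.card := by
  refine Polynomial.natDegree_sum_le_of_forall_le _ _ fun S hS => ?_
  rw [Finset.mem_powerset] at hS
  refine (Polynomial.natDegree_mul_le).trans ?_
  rw [Polynomial.natDegree_C, zero_add]
  refine (Polynomial.natDegree_mul_le).trans ?_
  have deg1 : ∀ (c : ℂ) (s : Finset ℕ) (v : ℕ → ℂ),
      (∏ n ∈ s, (Polynomial.C (v n) - Polynomial.X)).natDegree ≤ s.card := by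
    intro c s v
    refine (Polynomial.natDegree_prod_le _ _).trans ?_
    refine (Finset.sum_le_card_nsmul _ _ 1 fun n _ => ?_).trans (by simp)
    have : Polynomial.C (v n) - Polynomial.X = -(Polynomial.X - Polynomial.C (v n)) := by ring
    rw [this, Polynomial.natDegree_neg, Polynomial.natDegree_X_sub_C]
  have h1 := deg1 0 S p
  have h2 := deg1 0 (T \ S) q
  have hcards : S.card + (T \ S).card = T.card := by
    have h3 := Finset.card_le_card hS
    rw [Finset.card_sdiff_of_subset hS]
    omega
  calc (∏ n ∈ S, (Polynomial.C (p n) - Polynomial.X)).natDegree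
        + (∏ m ∈ T \ S, (Polynomial.C (q m) - Polynomial.X)).natDegree
      ≤ S.card + (T \ S).card := Nat.add_le_add h1 h2
    _ = T.card := hcards

end Part2

namespace Part3
open FayAux Part2
variable (p q : ℕ → ℂ)

theorem HP_eval {T : Finset ℕ} {a : ℂ} (ha : ∀ n ∈ T, q n ≠ a) (f : ℕ → ℂ) :
    (HP p q T f).eval a = HS p q T (fun n => f n * sigma p q n a) * ∏ k ∈ T, (q k - a) := by
  rw [HP, Polynomial.eval_finset_sum, HS, Finset.sum_mul]
  refine Finset.sum_congr rfl fun S hS => ?_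
  rw [Finset.mem_powerset] at hS
  simp only [Polynomial.eval_mul, Polynomial.eval_C, Polynomial.eval_prod,
    Polynomial.eval_sub, Polynomial.eval_X]
  have h1 : ∏ n ∈ S, -(f n * sigma p q n a)
      = (∏ n ∈ S, -f n) * ∏ n ∈ S, sigma p q n a := by
    rw [← Finset.prod_mul_distrib]
    exact Finset.prod_congr rfl fun n _ => by ring
  have h2 : (∏ n ∈ T \ S, (q n - a)) * ∏ n ∈ S, (q n - a) = ∏ n ∈ T, (q n - a) :=
    Finset.prod_sdiff hS
  have h3 : ∏ n ∈ S, (p n - a) = (∏ n ∈ S, sigma p q n a) * ∏ n ∈ S, (q n - a) := by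
    rw [← Finset.prod_mul_distrib]
    refine Finset.prod_congr rfl fun n hn => ?_
    rw [sigma, div_mul_cancel₀]
    exact sub_ne_zero.2 (ha n (hS hn))
  rw [h1, h3, ← h2]
  ring

theorem HP_eval_q {T : Finset ℕ} {k : ℕ} (hk : k ∈ T)
    (hq : ∀ m ∈ T.erase k, q m ≠ q k)
    (hsym : ∀ m ∈ T.erase k, k < m → sigma p q k (p m) * sigma p q m (q k)
      = sigma p q m (p k) * sigma p q k (q m)) (f : ℕ → ℂ) :
    (HP p q T f).eval (q k) = -(f k) * ((p k - q k) *
      (∏ m ∈ T.erase k, sigma p q k (q m)) * (∏ j ∈ T.erase k, (q j - q k))) *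
      HS p q (T.erase k) (fun n => f n * sigma p q n (p k) * sigma p q n (q k)) := by
  have hkT' : k ∉ T.erase k := Finset.notMem_erase k T
  rw [HP]
  conv_lhs => rw [← Finset.insert_erase hk]
  rw [Polynomial.eval_finset_sum, Finset.sum_powerset_insert hkT', Finset.insert_erase hk]
  have e1 : ∀ S ∈ (T.erase k).powerset,
      (Polynomial.C ((∏ n ∈ S, -f n) * W p q T S) *
        ((∏ n ∈ S, (Polynomial.C (p n) - Polynomial.X)) *
          ∏ m ∈ T \ S, (Polynomial.C (q m) - Polynomial.X))).eval (q k) = 0 := by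
    intro S hS
    rw [Finset.mem_powerset] at hS
    have hkTS : k ∈ T \ S := Finset.mem_sdiff.2 ⟨hk, fun h => (Finset.mem_erase.1 (hS h)).1 rfl⟩
    simp only [Polynomial.eval_mul, Polynomial.eval_C, Polynomial.eval_prod,
      Polynomial.eval_sub, Polynomial.eval_X]
    rw [Finset.prod_eq_zero hkTS (by ring)]
    ring
  rw [Finset.sum_congr rfl e1, Finset.sum_const, smul_zero, zero_add]
  rw [HS, Finset.mul_sum]
  refine Finset.sum_congr rfl fun S hS => ?_
  rw [Finset.mem_powerset] at hS
  have hkS : k ∉ S := fun h => (Finset.mem_erase.1 (hS h)).1 rfl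
  have hTS : T \ insert k S = (T.erase k) \ S := by
    ext x
    simp only [Finset.mem_sdiff, Finset.mem_insert, Finset.mem_erase]
    tauto
  simp only [Polynomial.eval_mul, Polynomial.eval_C, Polynomial.eval_prod,
    Polynomial.eval_sub, Polynomial.eval_X]
  rw [hTS, W_insert p q hk hS hsym, Finset.prod_insert hkS, Finset.prod_insert hkS]
  have h1 : ∏ n ∈ S, -(f n * sigma p q n (p k) * sigma p q n (q k))
      = ((∏ n ∈ S, -f n) * ∏ n ∈ S, sigma p q n (p k)) * ∏ n ∈ S, sigma p q n (q k) := by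
    rw [← Finset.prod_mul_distrib, ← Finset.prod_mul_distrib]
    exact Finset.prod_congr rfl fun n _ => by ring
  have h2 : (∏ m ∈ T.erase k \ S, sigma p q k (q m)) * ∏ m ∈ S, sigma p q k (q m)
      = ∏ m ∈ T.erase k, sigma p q k (q m) := Finset.prod_sdiff hS
  have h3 : (∏ j ∈ T.erase k \ S, (q j - q k)) * ∏ j ∈ S, (q j - q k)
      = ∏ j ∈ T.erase k, (q j - q k) := Finset.prod_sdiff hS
  have h4 : ∏ n ∈ S, (p n - q k)
      = (∏ n ∈ S, sigma p q n (q k)) * ∏ n ∈ S, (q n - q k) := by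
    rw [← Finset.prod_mul_distrib]
    refine Finset.prod_congr rfl fun n hn => ?_
    rw [sigma, div_mul_cancel₀]
    exact sub_ne_zero.2 (hq n (hS hn))
  rw [h1, h4, ← h2, ← h3, Finset.prod_mul_distrib]
  ring

end Part3


namespace Part4
open FayAux Part2 Part3
variable (p q : ℕ → ℂ)

theorem sigma_symm {k m : ℕ} (h1 : q k ≠ p m) (h2 : q m ≠ q k) (h3 : q m ≠ p k) :
    sigma p q k (p m) * sigma p q m (q k) = sigma p q m (p k) * sigma p q k (q m) := by
  unfold sigma
  have d1 : q k - p m ≠ 0 := sub_ne_zero.2 h1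
  have d2 : q m - q k ≠ 0 := sub_ne_zero.2 h2
  have d3 : q m - p k ≠ 0 := sub_ne_zero.2 h3
  have d4 : q k - q m ≠ 0 := sub_ne_zero.2 h2.symm
  field_simp
  ring

set_option maxHeartbeats 1000000 in
theorem FayS (T : Finset ℕ)
    (hdist : ∀ i ∈ T, ∀ j ∈ T, (i ≠ j → p i ≠ p j ∧ q i ≠ q j) ∧ p i ≠ q j)
    (f : ℕ → ℂ) (A B C D : ℂ)
    (hgen : ∀ n ∈ T,
      (p n ≠ A ∧ q n ≠ A) ∧ (p n ≠ B ∧ q n ≠ B) ∧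
      (p n ≠ C ∧ q n ≠ C) ∧ (p n ≠ D ∧ q n ≠ D)) :
    (A - D) * (C - B) *
        HS p q T (fun n => f n * (sigma p q n A / sigma p q n B)) *
        HS p q T (fun n => f n * (sigma p q n C / sigma p q n D)) +
      (A - B) * (D - C) *
        HS p q T (fun n => f n * (sigma p q n A / sigma p q n D)) *
        HS p q T (fun n => f n * (sigma p q n C / sigma p q n B)) =
      (A - C) * (D - B) * HS p q T f *
        HS p q T (fun n => f n * (sigma p q n A * sigma p q n C /
          (sigma p q n B * sigma p q n D))) := by
  induction T using Finset.strongInduction generalizing f A B C D with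
  | _ T IH => ?_
  -- nonvanishing of sigma values
  have hsig : ∀ n ∈ T, ∀ z : ℂ, p n ≠ z → q n ≠ z → sigma p q n z ≠ 0 := by
    intro n _ z h1 h2
    exact div_ne_zero (sub_ne_zero.2 h1) (sub_ne_zero.2 h2)
  have hsB : ∀ n ∈ T, sigma p q n B ≠ 0 := fun n hn =>
    hsig n hn B (hgen n hn).2.1.1 (hgen n hn).2.1.2
  have hsC : ∀ n ∈ T, sigma p q n C ≠ 0 := fun n hn =>
    hsig n hn C (hgen n hn).2.2.1.1 (hgen n hn).2.2.1.2
  have hsD : ∀ n ∈ T, sigma p q n D ≠ 0 := fun n hn =>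
    hsig n hn D (hgen n hn).2.2.2.1 (hgen n hn).2.2.2.2
  -- special coincidence cases
  by_cases hBC : B = C
  · subst hBC
    have e1 : HS p q T (fun n => f n * (sigma p q n B / sigma p q n B)) = HS p q T f :=
      HS_congr p q fun n hn => by rw [div_self (hsB n hn), mul_one]
    have e2 : HS p q T (fun n => f n * (sigma p q n A * sigma p q n B /
        (sigma p q n B * sigma p q n D)))
        = HS p q T (fun n => f n * (sigma p q n A / sigma p q n D)) :=
      HS_congr p q fun n hn => by
        rw [mul_comm (sigma p q n A) (sigma p q n B),
          mul_div_mul_left _ _ (hsB n hn)]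
    rw [e1, e2]
    ring
  by_cases hBD : B = D
  · subst hBD
    ring
  by_cases hCD : C = D
  · subst hCD
    have e1 : HS p q T (fun n => f n * (sigma p q n C / sigma p q n C)) = HS p q T f :=
      HS_congr p q fun n hn => by rw [div_self (hsC n hn), mul_one]
    have e2 : HS p q T (fun n => f n * (sigma p q n A * sigma p q n C /
        (sigma p q n B * sigma p q n C)))
        = HS p q T (fun n => f n * (sigma p q n A / sigma p q n B)) :=
      HS_congr p q fun n hn => by
        rw [mul_div_mul_comm, div_self (hsC n hn), mul_one]
    rw [e1, e2]
    ring
  -- generic case: B, C, D pairwise distinct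
  -- the polynomial in A
  set Φ : Polynomial ℂ :=
    (Polynomial.X - Polynomial.C D) *
      Polynomial.C ((C - B) * HS p q T (fun n => f n * (sigma p q n C / sigma p q n D))) *
        HP p q T (fun n => f n / sigma p q n B) +
    (Polynomial.X - Polynomial.C B) *
      Polynomial.C ((D - C) * HS p q T (fun n => f n * (sigma p q n C / sigma p q n B))) *
        HP p q T (fun n => f n / sigma p q n D) -
    (Polynomial.X - Polynomial.C C) *
      Polynomial.C ((D - B) * HS p q T f) *
        HP p q T (fun n => f n * sigma p q n C / (sigma p q n B * sigma p q n D)) with hΦ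
  have hqB : ∀ n ∈ T, q n ≠ B := fun n hn => (hgen n hn).2.1.2
  have hqC : ∀ n ∈ T, q n ≠ C := fun n hn => (hgen n hn).2.2.1.2
  have hqD : ∀ n ∈ T, q n ≠ D := fun n hn => (hgen n hn).2.2.2.2
  have hqA : ∀ n ∈ T, q n ≠ A := fun n hn => (hgen n hn).1.2
  -- roots at B, C, D, q k
  have hrootB : Φ.eval B = 0 := by
    rw [hΦ]
    simp only [Polynomial.eval_add, Polynomial.eval_sub, Polynomial.eval_mul,
      Polynomial.eval_X, Polynomial.eval_C]
    rw [HP_eval p q hqB, HP_eval p q hqB, HP_eval p q hqB]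
    have e1 : HS p q T (fun n => f n / sigma p q n B * sigma p q n B) = HS p q T f :=
      HS_congr p q fun n hn => div_mul_cancel₀ (f n) (hsB n hn)
    have e2 : HS p q T (fun n => f n * sigma p q n C / (sigma p q n B * sigma p q n D)
          * sigma p q n B)
        = HS p q T (fun n => f n * (sigma p q n C / sigma p q n D)) :=
      HS_congr p q fun n hn => by
        field_simp [hsB n hn, hsD n hn]
    rw [e1, e2]
    ring
  have hrootC : Φ.eval C = 0 := by
    rw [hΦ]
    simp only [Polynomial.eval_add, Polynomial.eval_sub, Polynomial.eval_mul,
      Polynomial.eval_X, Polynomial.eval_C]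
    rw [HP_eval p q hqC, HP_eval p q hqC, HP_eval p q hqC]
    have e1 : HS p q T (fun n => f n / sigma p q n B * sigma p q n C)
        = HS p q T (fun n => f n * (sigma p q n C / sigma p q n B)) :=
      HS_congr p q fun n hn => by ring
    have e2 : HS p q T (fun n => f n / sigma p q n D * sigma p q n C)
        = HS p q T (fun n => f n * (sigma p q n C / sigma p q n D)) :=
      HS_congr p q fun n hn => by ring
    rw [e1, e2]
    ring
  have hrootD : Φ.eval D = 0 := by
    rw [hΦ]
    simp only [Polynomial.eval_add, Polynomial.eval_sub, Polynomial.eval_mul,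
      Polynomial.eval_X, Polynomial.eval_C]
    rw [HP_eval p q hqD, HP_eval p q hqD, HP_eval p q hqD]
    have e1 : HS p q T (fun n => f n / sigma p q n D * sigma p q n D) = HS p q T f :=
      HS_congr p q fun n hn => div_mul_cancel₀ (f n) (hsD n hn)
    have e2 : HS p q T (fun n => f n * sigma p q n C / (sigma p q n B * sigma p q n D)
          * sigma p q n D)
        = HS p q T (fun n => f n * (sigma p q n C / sigma p q n B)) :=
      HS_congr p q fun n hn => by
        field_simp [hsB n hn, hsD n hn]
    rw [e1, e2]
    ring
  have hrootq : ∀ k ∈ T, Φ.eval (q k) = 0 := by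
    intro k hk
    have hgk := hgen k hk
    have hq' : ∀ m ∈ T.erase k, q m ≠ q k := fun m hm =>
      ((hdist m (Finset.mem_of_mem_erase hm) k hk).1 (Finset.ne_of_mem_erase hm)).2
    have hsymk : ∀ m ∈ T.erase k, k < m →
        sigma p q k (p m) * sigma p q m (q k) = sigma p q m (p k) * sigma p q k (q m) := by
      intro m hm _
      have hmT := Finset.mem_of_mem_erase hm
      exact sigma_symm p q ((hdist m hmT k hk).2).symm (hq' m hm)
        ((hdist k hk m hmT).2).symm
    have hsub : T.erase k ⊂ T := Finset.erase_ssubset hk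
    have hdist' : ∀ i ∈ T.erase k, ∀ j ∈ T.erase k,
        (i ≠ j → p i ≠ p j ∧ q i ≠ q j) ∧ p i ≠ q j := fun i hi j hj =>
      hdist i (Finset.mem_of_mem_erase hi) j (Finset.mem_of_mem_erase hj)
    have hgen1 : ∀ n ∈ T.erase k,
        (p n ≠ p k ∧ q n ≠ p k) ∧ (p n ≠ B ∧ q n ≠ B) ∧
        (p n ≠ C ∧ q n ≠ C) ∧ (p n ≠ D ∧ q n ≠ D) := by
      intro n hn
      have hnT := Finset.mem_of_mem_erase hn
      have hnk := Finset.ne_of_mem_erase hn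
      exact ⟨⟨((hdist n hnT k hk).1 hnk).1, ((hdist k hk n hnT).2).symm⟩,
        (hgen n hnT).2.1, (hgen n hnT).2.2.1, (hgen n hnT).2.2.2⟩
    have hgen2 : ∀ n ∈ T.erase k,
        (p n ≠ q k ∧ q n ≠ q k) ∧ (p n ≠ B ∧ q n ≠ B) ∧
        (p n ≠ C ∧ q n ≠ C) ∧ (p n ≠ D ∧ q n ≠ D) := by
      intro n hn
      have hnT := Finset.mem_of_mem_erase hn
      exact ⟨⟨(hdist n hnT k hk).2, hq' n hn⟩,
        (hgen n hnT).2.1, (hgen n hnT).2.2.1, (hgen n hnT).2.2.2⟩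
    have IH1 := IH (T.erase k) hsub hdist' (fun n => f n * sigma p q n (q k)) (p k) B C D hgen1
    have IH2 := IH (T.erase k) hsub hdist' (fun n => f n * sigma p q n (p k)) (q k) B C D hgen2
    beta_reduce at IH1 IH2
    rw [hΦ]
    simp only [Polynomial.eval_add, Polynomial.eval_sub, Polynomial.eval_mul,
      Polynomial.eval_X, Polynomial.eval_C]
    rw [HP_eval_q p q hk hq' hsymk (fun n => f n / sigma p q n B),
      HP_eval_q p q hk hq' hsymk (fun n => f n / sigma p q n D),
      HP_eval_q p q hk hq' hsymk
        (fun n => f n * sigma p q n C / (sigma p q n B * sigma p q n D)),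
      HS_erase p q hk hsymk (fun n => f n * (sigma p q n C / sigma p q n D)),
      HS_erase p q hk hsymk (fun n => f n * (sigma p q n C / sigma p q n B)),
      HS_erase p q hk hsymk f]
    -- canonicalize the HS atoms
    have c1 : HS p q (T.erase k)
        (fun n => f n / sigma p q n B * sigma p q n (p k) * sigma p q n (q k))
        = HS p q (T.erase k)
          (fun n => f n * sigma p q n (q k) * (sigma p q n (p k) / sigma p q n B)) :=
      HS_congr p q fun n hn => by ring
    have c2 : HS p q (T.erase k)
        (fun n => f n / sigma p q n D * sigma p q n (p k) * sigma p q n (q k))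
        = HS p q (T.erase k)
          (fun n => f n * sigma p q n (q k) * (sigma p q n (p k) / sigma p q n D)) :=
      HS_congr p q fun n hn => by ring
    have c3 : HS p q (T.erase k)
        (fun n => f n * sigma p q n C / (sigma p q n B * sigma p q n D)
          * sigma p q n (p k) * sigma p q n (q k))
        = HS p q (T.erase k)
          (fun n => f n * sigma p q n (q k) * (sigma p q n (p k) * sigma p q n C /
            (sigma p q n B * sigma p q n D))) :=
      HS_congr p q fun n hn => by ring
    have c4 : HS p q (T.erase k)
        (fun n => f n * (sigma p q n C / sigma p q n D) * sigma p q n (q k))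
        = HS p q (T.erase k)
          (fun n => f n * sigma p q n (q k) * (sigma p q n C / sigma p q n D)) :=
      HS_congr p q fun n hn => by ring
    have c5 : HS p q (T.erase k)
        (fun n => f n * (sigma p q n C / sigma p q n D) * sigma p q n (p k))
        = HS p q (T.erase k)
          (fun n => f n * sigma p q n (p k) * (sigma p q n C / sigma p q n D)) :=
      HS_congr p q fun n hn => by ring
    have c6 : HS p q (T.erase k)
        (fun n => f n * (sigma p q n C / sigma p q n B) * sigma p q n (q k))
        = HS p q (T.erase k)
          (fun n => f n * sigma p q n (q k) * (sigma p q n C / sigma p q n B)) :=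
      HS_congr p q fun n hn => by ring
    have c7 : HS p q (T.erase k)
        (fun n => f n * (sigma p q n C / sigma p q n B) * sigma p q n (p k))
        = HS p q (T.erase k)
          (fun n => f n * sigma p q n (p k) * (sigma p q n C / sigma p q n B)) :=
      HS_congr p q fun n hn => by ring
    rw [c1, c2, c3, c4, c5, c6, c7]
    -- canonicalize IH2 atoms to match IH1's
    have c8 : HS p q (T.erase k)
        (fun n => f n * sigma p q n (p k) * (sigma p q n (q k) / sigma p q n B))
        = HS p q (T.erase k)
          (fun n => f n * sigma p q n (q k) * (sigma p q n (p k) / sigma p q n B)) :=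
      HS_congr p q fun n hn => by ring
    have c9 : HS p q (T.erase k)
        (fun n => f n * sigma p q n (p k) * (sigma p q n (q k) / sigma p q n D))
        = HS p q (T.erase k)
          (fun n => f n * sigma p q n (q k) * (sigma p q n (p k) / sigma p q n D)) :=
      HS_congr p q fun n hn => by ring
    have c10 : HS p q (T.erase k)
        (fun n => f n * sigma p q n (p k) * (sigma p q n (q k) * sigma p q n C /
          (sigma p q n B * sigma p q n D)))
        = HS p q (T.erase k)
          (fun n => f n * sigma p q n (q k) * (sigma p q n (p k) * sigma p q n C /
            (sigma p q n B * sigma p q n D))) :=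
      HS_congr p q fun n hn => by ring
    rw [c8, c9, c10] at IH2
    -- relations for the sigma scalars at k
    have nB : q k - B ≠ 0 := sub_ne_zero.2 hgk.2.1.2
    have nC : q k - C ≠ 0 := sub_ne_zero.2 hgk.2.2.1.2
    have nD : q k - D ≠ 0 := sub_ne_zero.2 hgk.2.2.2.2
    have hsBk : sigma p q k B ≠ 0 := hsig k hk B hgk.2.1.1 hgk.2.1.2
    have hsDk : sigma p q k D ≠ 0 := hsig k hk D hgk.2.2.2.1 hgk.2.2.2.2
    have hgB : sigma p q k B * (sigma p q k B)⁻¹ = 1 := mul_inv_cancel₀ hsBk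
    have hgD : sigma p q k D * (sigma p q k D)⁻¹ = 1 := mul_inv_cancel₀ hsDk
    have hrB : sigma p q k B * (q k - B) = p k - B := div_mul_cancel₀ _ nB
    have hrC : sigma p q k C * (q k - C) = p k - C := div_mul_cancel₀ _ nC
    have hrD : sigma p q k D * (q k - D) = p k - D := div_mul_cancel₀ _ nD
    linear_combination
      (-(f k) * ((p k - q k) * (∏ m ∈ T.erase k, sigma p q k (q m)) *
          (∏ j ∈ T.erase k, (q j - q k))) * (sigma p q k B)⁻¹ * (sigma p q k D)⁻¹) * IH1 +
      (f k ^ 2 * ((p k - q k) * (∏ m ∈ T.erase k, sigma p q k (q m)) *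
          (∏ j ∈ T.erase k, (q j - q k))) * (∏ m ∈ T.erase k, sigma p q k (q m)) *
          sigma p q k C * (sigma p q k B)⁻¹ * (sigma p q k D)⁻¹) * IH2 +
      (f k * ((p k - q k) * (∏ m ∈ T.erase k, sigma p q k (q m)) *
          (∏ j ∈ T.erase k, (q j - q k))) * (C - B) *
        HS p q (T.erase k)
          (fun n => f n * sigma p q n (q k) * (sigma p q n (p k) / sigma p q n B)) *
        HS p q (T.erase k)
          (fun n => f n * sigma p q n (q k) * (sigma p q n C / sigma p q n D)) *
        (sigma p q k B)⁻¹ * (q k - D)) * hgD +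
      (-(f k) * ((p k - q k) * (∏ m ∈ T.erase k, sigma p q k (q m)) *
          (∏ j ∈ T.erase k, (q j - q k))) * (C - B) *
        HS p q (T.erase k)
          (fun n => f n * sigma p q n (q k) * (sigma p q n (p k) / sigma p q n B)) *
        HS p q (T.erase k)
          (fun n => f n * sigma p q n (q k) * (sigma p q n C / sigma p q n D)) *
        (sigma p q k B)⁻¹ * (sigma p q k D)⁻¹) * hrD +
      (f k * ((p k - q k) * (∏ m ∈ T.erase k, sigma p q k (q m)) *
          (∏ j ∈ T.erase k, (q j - q k))) * (D - C) *
        HS p q (T.erase k)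
          (fun n => f n * sigma p q n (q k) * (sigma p q n (p k) / sigma p q n D)) *
        HS p q (T.erase k)
          (fun n => f n * sigma p q n (q k) * (sigma p q n C / sigma p q n B)) *
        (sigma p q k D)⁻¹ * (q k - B)) * hgB +
      (-(f k) * ((p k - q k) * (∏ m ∈ T.erase k, sigma p q k (q m)) *
          (∏ j ∈ T.erase k, (q j - q k))) * (D - C) *
        HS p q (T.erase k)
          (fun n => f n * sigma p q n (q k) * (sigma p q n (p k) / sigma p q n D)) *
        HS p q (T.erase k)
          (fun n => f n * sigma p q n (q k) * (sigma p q n C / sigma p q n B)) *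
        (sigma p q k D)⁻¹ * (sigma p q k B)⁻¹) * hrB +
      (f k * ((p k - q k) * (∏ m ∈ T.erase k, sigma p q k (q m)) *
          (∏ j ∈ T.erase k, (q j - q k))) * (D - B) *
        HS p q (T.erase k) (fun n => f n * sigma p q n (q k)) *
        HS p q (T.erase k)
          (fun n => f n * sigma p q n (q k) * (sigma p q n (p k) * sigma p q n C /
            (sigma p q n B * sigma p q n D))) *
        (sigma p q k B)⁻¹ * (sigma p q k D)⁻¹) * hrC
  -- collect distinct roots
  have himage : ∀ x ∈ T.image q, Φ.eval x = 0 := by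
    intro x hx
    obtain ⟨k, hk, rfl⟩ := Finset.mem_image.1 hx
    exact hrootq k hk
  set s : Finset ℂ := insert B (insert C (insert D (T.image q))) with hs
  have hBs : B ∉ insert C (insert D (T.image q)) := by
    simp only [Finset.mem_insert, Finset.mem_image]
    push_neg
    exact ⟨hBC, hBD, fun n hn => (hqB n hn)⟩
  have hCs : C ∉ insert D (T.image q) := by
    simp only [Finset.mem_insert, Finset.mem_image]
    push_neg
    exact ⟨hCD, fun n hn => (hqC n hn)⟩
  have hDs : D ∉ T.image q := by
    simp only [Finset.mem_image]
    push_neg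
    exact fun n hn => (hqD n hn)
  have hcards : s.card = T.card + 3 := by
    rw [hs, Finset.card_insert_of_notMem hBs, Finset.card_insert_of_notMem hCs,
      Finset.card_insert_of_notMem hDs,
      Finset.card_image_of_injOn fun i hi j hj hij => by
        by_contra hne
        exact ((hdist i hi j hj).1 hne).2 hij]
  have hevals : ∀ x ∈ s, Φ.eval x = 0 := by
    intro x hx
    rw [hs] at hx
    simp only [Finset.mem_insert] at hx
    rcases hx with rfl | rfl | rfl | hx
    · exact hrootB
    · exact hrootC
    · exact hrootD
    · exact himage x hx
  have hdeg : Φ.natDegree ≤ T.card + 1 := by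
    rw [hΦ]
    refine (Polynomial.natDegree_sub_le _ _).trans ?_
    have h3 : ∀ (E : ℂ) (c : ℂ) (h : ℕ → ℂ),
        ((Polynomial.X - Polynomial.C E) * Polynomial.C c * HP p q T h).natDegree
          ≤ T.card + 1 := by
      intro E c h
      refine (Polynomial.natDegree_mul_le).trans ?_
      have : ((Polynomial.X - Polynomial.C E) * Polynomial.C c).natDegree ≤ 1 := by
        refine (Polynomial.natDegree_mul_le).trans ?_
        rw [Polynomial.natDegree_X_sub_C, Polynomial.natDegree_C]
      have h2 := HP_natDegree p q T h
      omega
    have h1 : ((Polynomial.X - Polynomial.C D) *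
        Polynomial.C ((C - B) * HS p q T (fun n => f n * (sigma p q n C / sigma p q n D))) *
        HP p q T (fun n => f n / sigma p q n B) +
      (Polynomial.X - Polynomial.C B) *
        Polynomial.C ((D - C) * HS p q T (fun n => f n * (sigma p q n C / sigma p q n B))) *
        HP p q T (fun n => f n / sigma p q n D)).natDegree ≤ T.card + 1 := by
      refine (Polynomial.natDegree_add_le _ _).trans ?_
      exact max_le (h3 _ _ _) (h3 _ _ _)
    exact max_le h1 (h3 _ _ _)
  have hΦ0 : Φ = 0 := by
    refine Polynomial.eq_zero_of_natDegree_lt_card_of_eval_eq_zero' Φ s hevals ?_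
    rw [hcards]
    omega
  -- evaluate at A
  have hevalA : Φ.eval A = 0 := by rw [hΦ0]; simp
  rw [hΦ] at hevalA
  simp only [Polynomial.eval_add, Polynomial.eval_sub, Polynomial.eval_mul,
    Polynomial.eval_X, Polynomial.eval_C] at hevalA
  rw [HP_eval p q hqA, HP_eval p q hqA, HP_eval p q hqA] at hevalA
  have e1 : HS p q T (fun n => f n / sigma p q n B * sigma p q n A)
      = HS p q T (fun n => f n * (sigma p q n A / sigma p q n B)) :=
    HS_congr p q fun n hn => by ring
  have e2 : HS p q T (fun n => f n / sigma p q n D * sigma p q n A)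
      = HS p q T (fun n => f n * (sigma p q n A / sigma p q n D)) :=
    HS_congr p q fun n hn => by ring
  have e3 : HS p q T (fun n => f n * sigma p q n C / (sigma p q n B * sigma p q n D)
        * sigma p q n A)
      = HS p q T (fun n => f n * (sigma p q n A * sigma p q n C /
          (sigma p q n B * sigma p q n D))) :=
    HS_congr p q fun n hn => by ring
  rw [e1, e2, e3] at hevalA
  have hQA : (∏ k ∈ T, (q k - A)) ≠ 0 :=
    Finset.prod_ne_zero_iff.2 fun n hn => sub_ne_zero.2 (hqA n hn)
  apply mul_right_cancel₀ hQA
  linear_combination hevalA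

end Part4

/-- the rational limit of the Fay identity. -/
theorem H_fay_identity (p q : ℕ → ℂ) (g : ℕ)
    (hdist : ∀ i ∈ Finset.Icc 1 g, ∀ j ∈ Finset.Icc 1 g,
      (i ≠ j → p i ≠ p j ∧ q i ≠ q j) ∧ p i ≠ q j)
    (f : ℕ → ℂ) (A B C D : ℂ)
    (hgen : ∀ n ∈ Finset.Icc 1 g,
      (p n ≠ A ∧ q n ≠ A) ∧ (p n ≠ B ∧ q n ≠ B) ∧
      (p n ≠ C ∧ q n ≠ C) ∧ (p n ≠ D ∧ q n ≠ D)) :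
    (A - D) * (C - B) *
        Hfun p q g (fun n => f n * (sigma p q n A / sigma p q n B)) *
        Hfun p q g (fun n => f n * (sigma p q n C / sigma p q n D)) +
      (A - B) * (D - C) *
        Hfun p q g (fun n => f n * (sigma p q n A / sigma p q n D)) *
        Hfun p q g (fun n => f n * (sigma p q n C / sigma p q n B)) =
      (A - C) * (D - B) * Hfun p q g f *
        Hfun p q g (fun n => f n * (sigma p q n A * sigma p q n C /
          (sigma p q n B * sigma p q n D))) := by
  simp only [Part2.Hfun_eq_HS p q g]
  exact Part4.FayS p q (Finset.Icc 1 g) hdist f A B C D hgen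
end

section
/- Let x_1, x_2 ∈ C depend on Λ via x_1 x_2 = 1/Λ, x_1 + x_2 = 1 − κ^N/Λ. Then the Laurent polynomial (x_1^M − x_2^M)/(x_1 − x_2), viewed as a function of 1/Λ, is a polynomial in 1/Λ of degree M−1 with constant term 1, and its roots Λ = Λ_k are given by Λ_k = Δ_{φ_k} Δ*_{φ_k} where Δ_φ = e^{iφ}(√(cos²φ + κ^N) + cos φ), Δ*_φ = e^{−iφ}(√(cos²φ + κ^N) + cos φ), and φ_k = kπ/M for k = 1, ..., M−1. -/
open Complex

private lemma prod_pair_aux {β : Type*} [CommMonoid β] (F G : ℕ → β) (M : ℕ)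
    (hpair : ∀ a b, a + b = M → F a * F b = G a * G b)
    (hmid : ∀ a, a + a = M → F a = G a) :
    ∀ d j, j + d + j = M →
      ∏ k ∈ Finset.Icc j (j + d), F k = ∏ k ∈ Finset.Icc j (j + d), G k := by
  intro d
  induction d using Nat.strong_induction_on with
  | _ d ih =>
    match d with
    | 0 =>
      intro j hj
      simp [hmid j (by omega)]
    | 1 =>
      intro j hj
      rw [Finset.prod_Icc_succ_top (by omega), Finset.prod_Icc_succ_top (by omega),
        Finset.Icc_self, Finset.prod_singleton, Finset.prod_singleton]
      exact hpair j (j + 1) (by omega)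
    | (n + 2) =>
      intro j hj
      have h1 : j + (n + 2) = (j + (n + 1)) + 1 := by omega
      rw [h1, Finset.prod_Icc_succ_top (by omega), Finset.prod_Icc_succ_top (by omega)]
      have h2 : Finset.Icc j (j + (n + 1)) = insert j (Finset.Icc (j + 1) (j + (n + 1))) := by
        rw [Finset.Icc_add_one_left_eq_Ioc, Finset.Ioc_insert_left (by omega)]
      have hnot : j ∉ Finset.Icc (j + 1) (j + (n + 1)) := by simp
      rw [h2, Finset.prod_insert hnot, Finset.prod_insert hnot]
      have h3 : j + 1 + n = j + (n + 1) := by omega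
      have hin := ih n (by omega) (j + 1) (by omega)
      rw [h3] at hin
      rw [hin, mul_right_comm (F j), mul_right_comm (G j),
        hpair j (j + (n + 1) + 1) (by omega)]

/-- `(x₁^M - x₂^M)/(x₁ - x₂)`, as a function of `1/Λ` (where
`x₁x₂ = 1/Λ`, `x₁ + x₂ = 1 - κ^N/Λ`), is the polynomial in `1/Λ` of degree `M-1`
with constant term `1` whose roots are `Λ_k = Δ_{φ_k} Δ*_{φ_k}`, `φ_k = kπ/M`,
where `Δ_φ = e^{iφ}(√(cos²φ + κ^N) + cos φ)` and `Δ*_φ = e^{-iφ}(√(cos²φ + κ^N) + cos φ)`: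
that is, `(x₁^M - x₂^M)/(x₁ - x₂) = ∏_{k=1}^{M-1} (1 - Λ_k/Λ)`. -/
theorem lax_power_roots (N M : ℕ) (hN : 2 ≤ N) (hM : 2 ≤ M)
    (κ Λ x1 x2 : ℂ) (hΛ : Λ ≠ 0) (hx : x1 ≠ x2)
    (hsum : x1 + x2 = 1 - κ ^ N / Λ) (hprod : x1 * x2 = 1 / Λ) :
    (x1 ^ M - x2 ^ M) / (x1 - x2) =
      ∏ k ∈ Finset.Icc 1 (M - 1),
        (1 -
          (Complex.exp (I * ((k : ℂ) * Real.pi / M)) *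
              ((Complex.cos ((k : ℂ) * Real.pi / M) ^ 2 + κ ^ N) ^ ((1 : ℂ) / 2) +
                Complex.cos ((k : ℂ) * Real.pi / M)) *
            (Complex.exp (-I * ((k : ℂ) * Real.pi / M)) *
              ((Complex.cos ((k : ℂ) * Real.pi / M) ^ 2 + κ ^ N) ^ ((1 : ℂ) / 2) +
                Complex.cos ((k : ℂ) * Real.pi / M)))) / Λ) := by
  have hMpos : 0 < M := by omega
  have hMC : (M : ℂ) ≠ 0 := Nat.cast_ne_zero.mpr (by omega)
  have hK : κ ^ N * (x1 * x2) = 1 - (x1 + x2) := by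
    rw [hprod, hsum]; field_simp; ring
  have hsq : ∀ c : ℂ, ((c ^ 2 + κ ^ N) ^ ((1 : ℂ) / 2)) ^ 2 = c ^ 2 + κ ^ N := by
    intro c
    rw [show ((1 : ℂ) / 2) = (((2 : ℕ) : ℂ))⁻¹ by norm_num]
    exact Complex.cpow_nat_inv_pow _ two_ne_zero
  set ζ : ℂ := Complex.exp (2 * ↑Real.pi * I / M) with hζdef
  have hprim : IsPrimitiveRoot ζ M := Complex.isPrimitiveRoot_exp M (by omega)
  set F : ℕ → ℂ := fun k => x1 - ζ ^ k * x2 with hF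
  set G : ℕ → ℂ := fun k =>
        (1 -
          (Complex.exp (I * ((k : ℂ) * Real.pi / M)) *
              ((Complex.cos ((k : ℂ) * Real.pi / M) ^ 2 + κ ^ N) ^ ((1 : ℂ) / 2) +
                Complex.cos ((k : ℂ) * Real.pi / M)) *
            (Complex.exp (-I * ((k : ℂ) * Real.pi / M)) *
              ((Complex.cos ((k : ℂ) * Real.pi / M) ^ 2 + κ ^ N) ^ ((1 : ℂ) / 2) +
                Complex.cos ((k : ℂ) * Real.pi / M)))) / Λ) with hG
  -- G in simplified form
  have hGsimp : ∀ k : ℕ, G k =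
      1 - (((Complex.cos ((k : ℂ) * Real.pi / M) ^ 2 + κ ^ N) ^ ((1 : ℂ) / 2) +
        Complex.cos ((k : ℂ) * Real.pi / M)) ^ 2) * (x1 * x2) := by
    intro k
    rw [hG]
    have huv : Complex.exp (I * ((k : ℂ) * Real.pi / M)) *
        Complex.exp (-I * ((k : ℂ) * Real.pi / M)) = 1 := by
      rw [← Complex.exp_add, show I * ((k : ℂ) * Real.pi / M) + -I * ((k : ℂ) * Real.pi / M) = 0
        by ring, Complex.exp_zero]
    have hdiv : ∀ X : ℂ, X / Λ = X * (x1 * x2) := by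
      intro X; rw [hprod]; field_simp
    simp only [hdiv]
    linear_combination (-(((Complex.cos ((k : ℂ) * Real.pi / M) ^ 2 + κ ^ N) ^ ((1 : ℂ) / 2) +
        Complex.cos ((k : ℂ) * Real.pi / M)) ^ 2) * (x1 * x2)) * huv
  -- factorization of x1^M - x2^M
  have hfact : x1 ^ M - x2 ^ M = ∏ k ∈ Finset.range M, F k := by
    rw [hprim.pow_sub_pow_eq_prod_sub_mul x1 x2 hMpos]
    have hinj : ∀ a ∈ Finset.range M, ∀ b ∈ Finset.range M, ζ ^ a = ζ ^ b → a = b := by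
      intro a ha b hb hab
      exact hprim.pow_inj (Finset.mem_range.mp ha) (Finset.mem_range.mp hb) hab
    have himg : Polynomial.nthRootsFinset M (1 : ℂ) = (Finset.range M).image (ζ ^ ·) := by
      symm
      apply Finset.eq_of_subset_of_card_le
      · intro x hx
        simp only [Finset.mem_image, Finset.mem_range] at hx
        obtain ⟨k, hk, rfl⟩ := hx
        rw [Polynomial.mem_nthRootsFinset hMpos, ← pow_mul, mul_comm, pow_mul,
          hprim.pow_eq_one, one_pow]
      · rw [hprim.card_nthRootsFinset, Finset.card_image_of_injOn hinj, Finset.card_range]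
    rw [himg, Finset.prod_image hinj]
  -- LHS as product over Icc 1 (M-1)
  have hrange : Finset.range M = insert 0 (Finset.Icc 1 (M - 1)) := by
    ext k
    simp only [Finset.mem_range, Finset.mem_insert, Finset.mem_Icc]
    omega
  have hLHS : (x1 ^ M - x2 ^ M) / (x1 - x2) = ∏ k ∈ Finset.Icc 1 (M - 1), F k := by
    rw [hfact, hrange, Finset.prod_insert (by simp)]
    have hF0 : F 0 = x1 - x2 := by simp [hF]
    rw [hF0, mul_comm, mul_div_assoc, div_self (sub_ne_zero.mpr hx), mul_one]
  rw [hLHS]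
  -- pairing identity
  have hpair : ∀ a b, a + b = M → F a * F b = G a * G b := by
    intro a b hab
    have hab' : (a : ℂ) + (b : ℂ) = (M : ℂ) := by exact_mod_cast congrArg (Nat.cast : ℕ → ℂ) hab
    set c : ℂ := Complex.cos ((a : ℂ) * Real.pi / M) with hc
    set s : ℂ := (c ^ 2 + κ ^ N) ^ ((1 : ℂ) / 2) with hs
    have hphi : (b : ℂ) * Real.pi / M = Real.pi - (a : ℂ) * Real.pi / M := by
      field_simp
      linear_combination hab'
    have hcb : Complex.cos ((b : ℂ) * Real.pi / M) = -c := by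
      rw [hphi, Complex.cos_pi_sub]
    -- G side
    have hGa : G a = 1 - (s + c) ^ 2 * (x1 * x2) := by rw [hGsimp a]
    have hGb : G b = 1 - (s - c) ^ 2 * (x1 * x2) := by
      rw [hGsimp b, hcb, neg_sq]
      ring
    have hGG : G a * G b = (x1 + x2) ^ 2 - 4 * c ^ 2 * (x1 * x2) := by
      rw [hGa, hGb]
      have h1 : s ^ 2 = c ^ 2 + κ ^ N := hsq c
      linear_combination ((x1 * x2) * ((x1 * x2) * (s ^ 2 - c ^ 2 + κ ^ N) - 2)) * h1 +
        (κ ^ N * (x1 * x2) - 1 - (x1 + x2)) * hK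
    -- F side
    set u : ℂ := Complex.exp (I * ((a : ℂ) * Real.pi / M)) with hu
    set v : ℂ := Complex.exp (-I * ((a : ℂ) * Real.pi / M)) with hv
    have huv : u * v = 1 := by
      rw [hu, hv, ← Complex.exp_add,
        show I * ((a : ℂ) * Real.pi / M) + -I * ((a : ℂ) * Real.pi / M) = 0 by ring,
        Complex.exp_zero]
    have hcos : u + v = 2 * c := by
      rw [hu, hv, hc,
        show I * ((a : ℂ) * ↑Real.pi / ↑M) = ((a : ℂ) * ↑Real.pi / ↑M) * I by ring,
        show -I * ((a : ℂ) * ↑Real.pi / ↑M) = -((a : ℂ) * ↑Real.pi / ↑M) * I by ring,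
        ← Complex.two_cos]
    have hza : ζ ^ a = u ^ 2 := by
      rw [hζdef, hu, ← Complex.exp_nat_mul, ← Complex.exp_nat_mul]
      congr 1
      push_cast
      field_simp
    have hzb : ζ ^ b = v ^ 2 := by
      rw [hζdef, hv, ← Complex.exp_nat_mul, ← Complex.exp_nat_mul,
        show ((b : ℕ) : ℂ) * (2 * ↑Real.pi * I / M) =
          ((2 : ℕ) : ℂ) * (-I * ((a : ℂ) * Real.pi / M)) + 2 * ↑Real.pi * I by
            field_simp
            linear_combination 2 * hab',
        Complex.exp_add, Complex.exp_two_pi_mul_I, mul_one]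
    have hFF : F a * F b = (x1 + x2) ^ 2 - 4 * c ^ 2 * (x1 * x2) := by
      rw [hF]
      simp only
      rw [hza, hzb]
      linear_combination ((u * v + 1) * x2 ^ 2 + 2 * (x1 * x2)) * huv -
        (x1 * x2) * (4 * c + (u + v - 2 * c)) * hcos
    rw [hFF, hGG]
  -- middle identity
  have hmid : ∀ a, a + a = M → F a = G a := by
    intro a hA
    have hA' : (a : ℂ) + (a : ℂ) = (M : ℂ) := by exact_mod_cast congrArg (Nat.cast : ℕ → ℂ) hA
    have hc0 : Complex.cos ((a : ℂ) * Real.pi / M) = 0 := by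
      rw [show (a : ℂ) * Real.pi / M = Real.pi / 2 by
        field_simp
        linear_combination hA', Complex.cos_pi_div_two]
    have hza : ζ ^ a = -1 := by
      rw [hζdef, ← Complex.exp_nat_mul, show ((a : ℕ) : ℂ) * (2 * ↑Real.pi * I / M) =
          ↑Real.pi * I by
            field_simp
            linear_combination hA', Complex.exp_pi_mul_I]
    rw [hGsimp a, hc0, hF]
    simp only
    rw [hza]
    linear_combination (x1 * x2) * hsq 0 + hK
  have hfin := prod_pair_aux F G M hpair hmid (M - 2) 1 (by omega)
  rw [show 1 + (M - 2) = M - 1 by omega] at hfin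
  exact hfin
end

section
/- Let N ≥ 2, ω = e^{2πi/N}, and let p_1 = (x_1,y_1), p_2 = (x_2,y_2), p_3 = (x_3,y_3) be points on the Fermat curve x^N + y^N = 1 satisfying x_1 x_2 = x_3, with all coordinates nonzero. Define the N²×N² matrix R on C^N ⊗ C^N by ⟨α_m, α_φ| R |β_m, β_φ⟩ = ω^{(α_m − β_m)β_φ} · w_{p_1}(α_φ − α_m) w_{p_2}(β_φ − β_m) / w_{p_3}(β_φ − α_m) · δ_{α_φ, β_m}. Then R x_m R^{-1} = x_φ, where x_m = x ⊗ 1 and x_φ = 1 ⊗ x with x the diagonal matrix x|α⟩ = ω^α|α⟩. -/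
open Complex Finset

section aux

variable {N : ℕ} [NeZero N] {ω : ℂ}

private lemma aux_pow_mod (h1 : ω ^ N = 1) (j : ℕ) : ω ^ j = ω ^ (j % N) := by
  conv_lhs => rw [← Nat.div_add_mod j N]
  rw [pow_add, pow_mul, h1, one_pow, one_mul]

private lemma aux_chi_mul (h1 : ω ^ N = 1) (a b : ZMod N) :
    ω ^ a.val * ω ^ b.val = ω ^ (a + b).val := by
  rw [ZMod.val_add, ← aux_pow_mod h1, pow_add]

private lemma aux_chi_pow (h1 : ω ^ N = 1) (d b : ZMod N) :
    ω ^ (d * b).val = ω ^ (b.val * d.val) := by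
  rw [ZMod.val_mul, ← aux_pow_mod h1, Nat.mul_comm]

private lemma aux_sum_zmod (f : ℕ → ℂ) :
    ∑ b : ZMod N, f b.val = ∑ i ∈ Finset.range N, f i :=
  Finset.sum_nbij' (fun b => b.val) (fun i => (i : ZMod N))
    (fun b _ => Finset.mem_range.2 b.val_lt) (fun _ _ => Finset.mem_univ _)
    (fun b _ => ZMod.natCast_zmod_val b)
    (fun i hi => ZMod.val_cast_of_lt (Finset.mem_range.1 hi))
    (fun _ _ => rfl)

private lemma aux_char_sum (hprim : IsPrimitiveRoot ω N) (e : ℕ) :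
    ∑ b : ZMod N, ω ^ (b.val * e) = if N ∣ e then (N : ℂ) else 0 := by
  have h1 : ω ^ N = 1 := hprim.pow_eq_one
  have hre : ∑ b : ZMod N, ω ^ (b.val * e) = ∑ i ∈ Finset.range N, (ω ^ e) ^ i := by
    rw [← aux_sum_zmod (fun i => (ω ^ e) ^ i)]
    exact Finset.sum_congr rfl fun b _ => by rw [← pow_mul, Nat.mul_comm]
  rw [hre]
  by_cases hd : N ∣ e
  · have : ω ^ e = 1 := (hprim.pow_eq_one_iff_dvd e).2 hd
    simp [this, hd]
  · have hne : ω ^ e ≠ 1 := fun h => hd ((hprim.pow_eq_one_iff_dvd e).1 h)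
    rw [geom_sum_eq hne, ← pow_mul, Nat.mul_comm, pow_mul, h1, one_pow]
    simp [hd]

private lemma aux_W_ne {W : ZMod N → ℂ} {x y : ℂ} (hy : y ≠ 0) (h0 : W 0 = 1)
    (hrec : ∀ n : ZMod N, (1 - x * ω ^ n.val) * W n = y * W (n - 1)) :
    ∀ b : ZMod N, W b ≠ 0 := by
  have key : ∀ j : ℕ, j < N → W (j : ZMod N) ≠ 0 := by
    intro j
    induction j with
    | zero => intro _; rw [Nat.cast_zero, h0]; exact one_ne_zero
    | succ j ih =>
      intro hj
      have hWj := ih (Nat.lt_of_succ_lt hj)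
      have hrec' := hrec ((j + 1 : ℕ) : ZMod N)
      have hs : ((j + 1 : ℕ) : ZMod N) - 1 = (j : ZMod N) := by push_cast; ring
      rw [hs] at hrec'
      intro h0'
      rw [h0', mul_zero] at hrec'
      exact (mul_ne_zero hy hWj) hrec'.symm
  intro b
  have := key b.val b.val_lt
  rwa [ZMod.natCast_zmod_val] at this

private lemma aux_W_prod {W : ZMod N → ℂ} {x y : ℂ}
    (hrec : ∀ n : ZMod N, (1 - x * ω ^ n.val) * W n = y * W (n - 1)) (b : ZMod N) :
    ∀ n : ℕ, y ^ n * W (b - (n : ZMod N)) =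
      W b * ∏ j ∈ Finset.range n, (1 - x * ω ^ ((b - (j : ZMod N)).val)) := by
  intro n
  induction n with
  | zero => simp
  | succ n ih =>
    have h1 : b - ((n + 1 : ℕ) : ZMod N) = (b - (n : ZMod N)) - 1 := by push_cast; ring
    have h2 := hrec (b - (n : ZMod N))
    rw [Finset.prod_range_succ, ← mul_assoc, ← ih, h1]
    calc y ^ (n + 1) * W (b - (n : ZMod N) - 1)
        = y ^ n * (y * W (b - (n : ZMod N) - 1)) := by ring
      _ = y ^ n * ((1 - x * ω ^ ((b - (n : ZMod N)).val)) * W (b - (n : ZMod N))) := by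
          rw [h2]
      _ = y ^ n * W (b - (n : ZMod N)) * (1 - x * ω ^ ((b - (n : ZMod N)).val)) := by ring

private lemma aux_key (hprim : IsPrimitiveRoot ω N) {W : ZMod N → ℂ} {x y : ℂ}
    (hy : y ≠ 0) (h0 : W 0 = 1)
    (hrec : ∀ n : ZMod N, (1 - x * ω ^ n.val) * W n = y * W (n - 1)) (d : ZMod N) :
    ∑ b : ZMod N, ω ^ (d * b).val * (W (b + d + 1) / W b) =
      if d = 0 then (N : ℂ) * (y ^ (N - 1))⁻¹ else 0 := by
  have hω1 : ω ^ N = 1 := hprim.pow_eq_one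
  have hWne := aux_W_ne hy h0 hrec
  have hN0 : N ≠ 0 := NeZero.ne N
  have hN1 : 1 ≤ N := Nat.one_le_iff_ne_zero.2 hN0
  set n : ℕ := N - 1 - d.val with hn
  have hdval : d.val < N := d.val_lt
  have hdle : d.val ≤ N - 1 := Nat.le_sub_one_of_lt hdval
  have hcast : ((n : ℕ) : ZMod N) = -1 - d := by
    rw [hn, Nat.cast_sub hdle, Nat.cast_sub hN1, ZMod.natCast_self, ZMod.natCast_zmod_val]
    push_cast
    ring
  have hnle : n ≤ N - 1 := Nat.sub_le _ _
  have hratio : ∀ b : ZMod N, W (b + d + 1) / W b =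
      (∏ j ∈ Finset.range n, (1 - x * ω ^ ((b - (j : ZMod N)).val))) / y ^ n := by
    intro b
    have harg : b - ((n : ℕ) : ZMod N) = b + d + 1 := by rw [hcast]; ring
    rw [div_eq_div_iff (hWne b) (pow_ne_zero n hy), ← harg]
    linear_combination aux_W_prod hrec b n
  have hprod : ∀ b : ZMod N, ∏ j ∈ Finset.range n, (1 - x * ω ^ ((b - (j : ZMod N)).val)) =
      ∑ t ∈ (Finset.range n).powerset,
        ((-x) ^ t.card * ∏ j ∈ t, ω ^ ((-(j : ZMod N)).val)) * ω ^ (b.val * t.card) := by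
    intro b
    have h1 : ∀ j ∈ Finset.range n, (1 - x * ω ^ ((b - (j : ZMod N)).val)) =
        (-(x * ω ^ ((b - (j : ZMod N)).val)) + 1) := fun j _ => by ring
    rw [Finset.prod_congr rfl h1, Finset.prod_add]
    refine Finset.sum_congr rfl fun t _ => ?_
    rw [Finset.prod_const_one, mul_one]
    have h2 : ∀ j ∈ t, -(x * ω ^ ((b - (j : ZMod N)).val)) =
        (-x * ω ^ b.val) * ω ^ ((-(j : ZMod N)).val) := by
      intro j _
      have h3 : ω ^ ((b - (j : ZMod N)).val) = ω ^ b.val * ω ^ ((-(j : ZMod N)).val) := by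
        rw [aux_chi_mul hω1, sub_eq_add_neg]
      rw [h3]; ring
    rw [Finset.prod_congr rfl h2, Finset.prod_mul_distrib, Finset.prod_const, mul_pow,
      ← pow_mul]
    ring
  have hmain : ∑ b : ZMod N, ω ^ (d * b).val * (W (b + d + 1) / W b) =
      (y ^ n)⁻¹ * ∑ t ∈ (Finset.range n).powerset,
        ((-x) ^ t.card * ∏ j ∈ t, ω ^ ((-(j : ZMod N)).val)) *
          (if N ∣ d.val + t.card then (N : ℂ) else 0) := by
    have step1 : ∀ b : ZMod N, ω ^ (d * b).val * (W (b + d + 1) / W b) =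
        ∑ t ∈ (Finset.range n).powerset,
          (y ^ n)⁻¹ * (((-x) ^ t.card * ∏ j ∈ t, ω ^ ((-(j : ZMod N)).val)) *
            ω ^ (b.val * (d.val + t.card))) := by
      intro b
      rw [hratio b, hprod b, div_eq_mul_inv, Finset.sum_mul, Finset.mul_sum]
      refine Finset.sum_congr rfl fun t _ => ?_
      have h4 : ω ^ (d * b).val * ω ^ (b.val * t.card) = ω ^ (b.val * (d.val + t.card)) := by
        rw [aux_chi_pow hω1, ← pow_add, Nat.mul_add]
      rw [← h4]; ring
    rw [Finset.sum_congr rfl (fun b _ => step1 b), Finset.sum_comm, Finset.mul_sum]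
    refine Finset.sum_congr rfl fun t _ => ?_
    rw [← Finset.mul_sum, ← Finset.mul_sum, aux_char_sum hprim (d.val + t.card)]
  rw [hmain]
  by_cases hd : d = 0
  · rw [if_pos hd]
    have hdv : d.val = 0 := by rw [hd, ZMod.val_zero]
    have hne : n = N - 1 := by rw [hn, hdv, Nat.sub_zero]
    have hsum : ∑ t ∈ (Finset.range n).powerset,
        ((-x) ^ t.card * ∏ j ∈ t, ω ^ ((-(j : ZMod N)).val)) *
          (if N ∣ d.val + t.card then (N : ℂ) else 0) = (N : ℂ) := by
      rw [Finset.sum_eq_single (∅ : Finset ℕ)]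
      · simp [hdv]
      · intro t ht htne
        have hc1 : 0 < t.card := Finset.card_pos.2 (Finset.nonempty_iff_ne_empty.2 htne)
        have hc2 : t.card ≤ n := by
          have := Finset.card_le_card (Finset.mem_powerset.1 ht)
          simpa using this
        have hnd : ¬ N ∣ (d.val + t.card) := by
          intro hdvd
          have := Nat.le_of_dvd (by omega) hdvd
          omega
        rw [if_neg hnd, mul_zero]
      · intro h
        exact absurd (Finset.mem_powerset.2 (Finset.empty_subset _)) h
    rw [hsum, hne]
    ring
  · rw [if_neg hd]
    have hd1 : 1 ≤ d.val := Nat.pos_of_ne_zero (fun h => hd ((ZMod.val_eq_zero d).1 h))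
    have hzero : ∀ t ∈ (Finset.range n).powerset,
        ((-x) ^ t.card * ∏ j ∈ t, ω ^ ((-(j : ZMod N)).val)) *
          (if N ∣ d.val + t.card then (N : ℂ) else 0) = 0 := by
      intro t ht
      have hc2 : t.card ≤ n := by
        have := Finset.card_le_card (Finset.mem_powerset.1 ht)
        simpa using this
      have hnd : ¬ N ∣ (d.val + t.card) := by
        intro hdvd
        have := Nat.le_of_dvd (by omega) hdvd
        omega
      rw [if_neg hnd, mul_zero]
    rw [Finset.sum_eq_zero hzero, mul_zero]

private lemma aux_key' (hprim : IsPrimitiveRoot ω N) {W : ZMod N → ℂ} {x y : ℂ}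
    (hy : y ≠ 0) (h0 : W 0 = 1)
    (hrec : ∀ n : ZMod N, (1 - x * ω ^ n.val) * W n = y * W (n - 1)) (d α : ZMod N) :
    ∑ b : ZMod N, ω ^ (d * b).val * (W (b - α + d + 1) / W (b - α)) =
      if d = 0 then (N : ℂ) * (y ^ (N - 1))⁻¹ else 0 := by
  have hω1 : ω ^ N = 1 := hprim.pow_eq_one
  have hshift : ∑ b : ZMod N, ω ^ (d * b).val * (W (b - α + d + 1) / W (b - α)) =
      ∑ b : ZMod N, ω ^ (d * (b + α)).val * (W (b + d + 1) / W b) := by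
    apply Fintype.sum_equiv (Equiv.subRight α)
    intro b
    simp only [Equiv.subRight_apply]
    rw [sub_add_cancel]
  rw [hshift]
  have hsplit : ∀ b : ZMod N, ω ^ (d * (b + α)).val =
      ω ^ (d * α).val * ω ^ (d * b).val := by
    intro b
    rw [aux_chi_mul hω1]
    congr 1
    ring
  calc ∑ b : ZMod N, ω ^ (d * (b + α)).val * (W (b + d + 1) / W b)
      = ω ^ (d * α).val * ∑ b : ZMod N, ω ^ (d * b).val * (W (b + d + 1) / W b) := by
        rw [Finset.mul_sum]
        exact Finset.sum_congr rfl fun b _ => by rw [hsplit b]; ring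
    _ = if d = 0 then (N : ℂ) * (y ^ (N - 1))⁻¹ else 0 := by
        rw [aux_key hprim hy h0 hrec d]
        by_cases hd : d = 0
        · simp [hd]
        · simp [hd]

end aux

/-- the matrix `R` built from the Fermat-curve functions `w_{p₁}, w_{p₂},
w_{p₃}` (with `x₁x₂ = x₃`) conjugates `x_m = x ⊗ 1` into `x_φ = 1 ⊗ x`, where `x` is the
clock matrix `x|α⟩ = ω^α|α⟩`. -/
theorem R_conjugates_xm_to_xphi (N : ℕ) [NeZero N] (hN : 2 ≤ N)
    (ω : ℂ) (hω : ω = Complex.exp (2 * Real.pi * I / N))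
    (x1 y1 x2 y2 x3 y3 : ℂ)
    (h1 : x1 ^ N + y1 ^ N = 1) (h2 : x2 ^ N + y2 ^ N = 1) (h3 : x3 ^ N + y3 ^ N = 1)
    (hx12 : x1 * x2 = x3)
    (hnz : x1 ≠ 0 ∧ y1 ≠ 0 ∧ x2 ≠ 0 ∧ y2 ≠ 0 ∧ x3 ≠ 0 ∧ y3 ≠ 0)
    (hgen : ∀ n : ℕ, x1 * ω ^ n ≠ 1 ∧ x2 * ω ^ n ≠ 1 ∧ x3 * ω ^ n ≠ 1)
    (W1 W2 W3 : ZMod N → ℂ)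
    (hW1 : W1 0 = 1 ∧ ∀ n : ZMod N, (1 - x1 * ω ^ n.val) * W1 n = y1 * W1 (n - 1))
    (hW2 : W2 0 = 1 ∧ ∀ n : ZMod N, (1 - x2 * ω ^ n.val) * W2 n = y2 * W2 (n - 1))
    (hW3 : W3 0 = 1 ∧ ∀ n : ZMod N, (1 - x3 * ω ^ n.val) * W3 n = y3 * W3 (n - 1))
    (R Xm Xphi : Matrix (ZMod N × ZMod N) (ZMod N × ZMod N) ℂ)
    (hR : ∀ a b : ZMod N × ZMod N,
      R a b = ω ^ (((a.1 - b.1) * b.2).val) *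
        (W1 (a.2 - a.1) * W2 (b.2 - b.1) / W3 (b.2 - a.1)) *
        (if a.2 = b.1 then 1 else 0))
    (hXm : ∀ a b : ZMod N × ZMod N, Xm a b = if a = b then ω ^ a.1.val else 0)
    (hXphi : ∀ a b : ZMod N × ZMod N, Xphi a b = if a = b then ω ^ a.2.val else 0) :
    R * Xm * R⁻¹ = Xphi := by
  obtain ⟨hx1, hy1, hx2, hy2, hx3, hy3⟩ := hnz
  have hNne : (N : ℂ) ≠ 0 := Nat.cast_ne_zero.2 (NeZero.ne N)
  have hprim : IsPrimitiveRoot ω N := by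
    rw [hω]; exact Complex.isPrimitiveRoot_exp N (NeZero.ne N)
  have hω1 : ω ^ N = 1 := hprim.pow_eq_one
  have hW1ne := aux_W_ne hy1 hW1.1 hW1.2
  have hW2ne := aux_W_ne hy2 hW2.1 hW2.2
  have hW3ne := aux_W_ne hy3 hW3.1 hW3.2
  -- commutation relation
  have hcomm : R * Xm = Xphi * R := by
    ext a c
    rw [Matrix.mul_apply, Matrix.mul_apply]
    have hL : ∑ b : ZMod N × ZMod N, R a b * Xm b c = R a c * ω ^ c.1.val := by
      rw [Finset.sum_eq_single c]
      · rw [hXm]; simp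
      · intro b _ hb; rw [hXm, if_neg hb, mul_zero]
      · intro h; exact absurd (Finset.mem_univ c) h
    have hRt : ∑ b : ZMod N × ZMod N, Xphi a b * R b c = ω ^ a.2.val * R a c := by
      rw [Finset.sum_eq_single a]
      · rw [hXphi]; simp
      · intro b _ hb; rw [hXphi, if_neg (fun h => hb h.symm), zero_mul]
      · intro h; exact absurd (Finset.mem_univ a) h
    rw [hL, hRt, hR]
    by_cases h : a.2 = c.1
    · rw [if_pos h, h]; ring
    · rw [if_neg h]; ring
  -- explicit right inverse
  have hRM : R * (Matrix.of fun p q : ZMod N × ZMod N =>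
      (if p.1 = q.2 then 1 else 0) *
        (ω ^ (((q.2 - q.1) * p.2).val) * W3 (p.2 - q.1 + 1) * y3 ^ (N - 1) /
          ((N : ℂ) * W1 (q.2 - q.1) * W2 (p.2 - p.1)))) = 1 := by
    ext a c
    rw [Matrix.mul_apply, Fintype.sum_prod_type]
    rw [Finset.sum_eq_single a.2]
    rotate_left
    · intro p1 _ hp1
      apply Finset.sum_eq_zero
      intro p2 _
      rw [hR, if_neg (fun h => hp1 h.symm), mul_zero, zero_mul]
    · intro h; exact absurd (Finset.mem_univ a.2) h
    by_cases hc : a.2 = c.2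
    · -- diagonal block
      have hterm : ∀ b : ZMod N,
          R a (a.2, b) * Matrix.of (fun p q : ZMod N × ZMod N =>
            (if p.1 = q.2 then 1 else 0) *
              (ω ^ (((q.2 - q.1) * p.2).val) * W3 (p.2 - q.1 + 1) * y3 ^ (N - 1) /
                ((N : ℂ) * W1 (q.2 - q.1) * W2 (p.2 - p.1)))) (a.2, b) c =
          (W1 (a.2 - a.1) * y3 ^ (N - 1) / ((N : ℂ) * W1 (a.2 - c.1))) *
            (ω ^ (((a.1 - c.1) * b).val) *
              (W3 (b - a.1 + (a.1 - c.1) + 1) / W3 (b - a.1))) := by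
        intro b
        rw [hR, Matrix.of_apply]
        simp only [eq_self_iff_true, if_true]
        rw [if_pos hc]
        have hχ : ω ^ (((a.1 - a.2) * b).val) * ω ^ (((c.2 - c.1) * b).val) =
            ω ^ (((a.1 - c.1) * b).val) := by
          rw [aux_chi_mul hω1]
          apply congrArg (fun z : ZMod N => ω ^ z.val)
          rw [← hc]; ring
        have harg : b - c.1 + 1 = b - a.1 + (a.1 - c.1) + 1 := by ring
        have hW1c : W1 (c.2 - c.1) = W1 (a.2 - c.1) := by rw [← hc]
        rw [harg, hW1c, ← hχ]
        field_simp [hW2ne (b - a.2), hW3ne (b - a.1), hW1ne (a.2 - c.1), hNne]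
      rw [Finset.sum_congr rfl (fun b _ => hterm b), ← Finset.mul_sum,
        aux_key' hprim hy3 hW3.1 hW3.2 (a.1 - c.1) a.1]
      by_cases h1 : a.1 = c.1
      · have hac : a = c := Prod.ext h1 hc
        rw [if_pos (by rw [h1, sub_self]), Matrix.one_apply, if_pos hac, h1]
        field_simp [hW1ne (a.2 - c.1), hNne, pow_ne_zero (N - 1) hy3]
      · rw [if_neg (fun h => h1 (sub_eq_zero.1 h)), mul_zero, Matrix.one_apply,
          if_neg (fun h => h1 (congrArg Prod.fst h))]
    · -- off-diagonal in second index
      rw [Finset.sum_eq_zero, Matrix.one_apply_ne (fun h => hc (by rw [h]))]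
      intro p2 _
      rw [Matrix.of_apply]
      simp only
      rw [if_neg hc, zero_mul, mul_zero]
  rw [Matrix.inv_eq_right_inv hRM, hcomm, mul_assoc, hRM, mul_one]
end
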